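/- arXiv:2010.02779 — 10 statements merged into one kernel-verified Lean document; each statement's English description precedes it below -/
import Mathlib

section
/- For a nonzero code C ≤ Π and 1 ≤ d ≤ N, the following are equivalent: (1) srk(C) ≥ d; (2) for every tuple U = (U_1,...,U_t) of subspaces U_i ≤ F_q^{n_i} with Σ dim(U_i) ≤ d−1, the shortening C(U) = {X ∈ C : colsp(X_i) ⊆ U_i for all i} equals {0}; (3) the same holds for all U with Σ dim(U_i) = d−1. -/
open Matrix Finset

/-- The sum-rank of a tuple of matrices. -/
noncomputable def srk {Fq : Type*} [Field Fq] {t : ℕ} {n m : Fin t → ℕ}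
    (X : ∀ i, Matrix (Fin (n i)) (Fin (m i)) Fq) : ℕ :=
  ∑ i, (X i).rank

/-- The column space of a matrix. -/
noncomputable def colsp {Fq : Type*} [Field Fq] {a b : ℕ}
    (X : Matrix (Fin a) (Fin b) Fq) : Submodule Fq (Fin a → Fq) :=
  LinearMap.range X.mulVecLin

lemma rank_eq_finrank_colsp {Fq : Type*} [Field Fq] {a b : ℕ}
    (X : Matrix (Fin a) (Fin b) Fq) : X.rank = Module.finrank Fq (colsp X) := rfl

lemma aux_extend {K V : Type*} [Field K] [AddCommGroup V] [Module K V]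
    [FiniteDimensional K V] (W : Submodule K V) (k : ℕ)
    (h1 : Module.finrank K W ≤ k) (h2 : k ≤ Module.finrank K V) :
    ∃ W' : Submodule K V, W ≤ W' ∧ Module.finrank K W' = k := by
  induction k, h1 using Nat.le_induction with
  | base => exact ⟨W, le_rfl, rfl⟩
  | succ k hk ih =>
    obtain ⟨W', hWW', hW'⟩ := ih (le_of_lt (Nat.lt_of_succ_le h2))
    have hlt : Module.finrank K W' < Module.finrank K V := by omega
    obtain ⟨x, hx⟩ := W'.exists_of_finrank_lt hlt
    have hxW' : x ∉ W' := by simpa using hx 1 one_ne_zero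
    refine ⟨W' ⊔ K ∙ x, le_trans hWW' le_sup_left, ?_⟩
    have hinf : W' ⊓ (K ∙ x) = ⊥ := by
      rw [Submodule.eq_bot_iff]
      rintro y ⟨hy1, hy2⟩
      obtain ⟨r, rfl⟩ := Submodule.mem_span_singleton.mp hy2
      by_contra h
      exact hx r (fun hr => h (by simp [hr])) hy1
    have hx0 : x ≠ 0 := fun h => hxW' (h ▸ W'.zero_mem)
    have := Submodule.finrank_sup_add_finrank_inf_eq W' (K ∙ x)
    rw [hinf, finrank_span_singleton hx0] at this
    simp only [finrank_bot] at this
    omega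

lemma aux_tuple {Fq : Type} [Field Fq] {t : ℕ} {n : Fin t → ℕ}
    (U : ∀ i, Submodule Fq (Fin (n i) → Fq)) (s : ℕ)
    (h1 : (∑ i, Module.finrank Fq (U i)) ≤ s) (h2 : s ≤ ∑ i, n i) :
    ∃ V : ∀ i, Submodule Fq (Fin (n i) → Fq),
      (∀ i, U i ≤ V i) ∧ (∑ i, Module.finrank Fq (V i)) = s := by
  induction s, h1 using Nat.le_induction with
  | base => exact ⟨U, fun i => le_rfl, rfl⟩
  | succ s hs ih =>
    obtain ⟨V, hUV, hV⟩ := ih (le_of_lt (Nat.lt_of_succ_le h2))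
    have hex : ∃ i, Module.finrank Fq (V i) < n i := by
      by_contra h
      push_neg at h
      have : (∑ i, n i) ≤ ∑ i, Module.finrank Fq (V i) :=
        Finset.sum_le_sum fun i _ => h i
      omega
    obtain ⟨i, hi⟩ := hex
    obtain ⟨W, hVW, hW⟩ := aux_extend (V i) (Module.finrank Fq (V i) + 1)
      (by omega) (by simpa using hi)
    refine ⟨Function.update V i W, fun j => ?_, ?_⟩
    · rcases eq_or_ne j i with rfl | hj
      · simpa using le_trans (hUV j) hVW
      · simpa [Function.update_of_ne hj] using hUV j
    · have key : ∀ j, Module.finrank Fq (Function.update V i W j) =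
          Function.update (fun j => Module.finrank Fq (V j)) i
            (Module.finrank Fq W) j := by
        intro j
        rcases eq_or_ne j i with rfl | hj
        · rw [Function.update_self, Function.update_self]
        · rw [Function.update_of_ne hj, Function.update_of_ne hj]
      rw [Finset.sum_congr rfl (fun j _ => key j),
        Finset.sum_update_of_mem (Finset.mem_univ i)]
      rw [Finset.sum_eq_sum_sdiff_singleton_add (Finset.mem_univ i)
        (fun j => Module.finrank Fq (V j))] at hV
      omega

/-- for a nonzero linear code `C ≤ Π` and `1 ≤ d ≤ N`, the following are
equivalent: (1) `srk(C) ≥ d`; (2) the shortening `C(U)` is zero for every tuple `U` of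
subspaces of total dimension at most `d - 1`; (3) the same for total dimension exactly
`d - 1`. -/
theorem minDist_iff_shortenings_trivial (Fq : Type) [Field Fq] [Fintype Fq]
    (t : ℕ) (n m : Fin t → ℕ) (hnm : ∀ i, 1 ≤ n i ∧ n i ≤ m i)
    (C : Submodule Fq (∀ i, Matrix (Fin (n i)) (Fin (m i)) Fq)) (hC : C ≠ ⊥)
    (d : ℕ) (hd1 : 1 ≤ d) (hdN : d ≤ ∑ i, n i) :
    ((∀ X ∈ C, X ≠ 0 → d ≤ srk X) ↔
      (∀ U : ∀ i, Submodule Fq (Fin (n i) → Fq),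
        (∑ i, Module.finrank Fq (U i)) ≤ d - 1 →
        ∀ X ∈ C, (∀ i, colsp (X i) ≤ U i) → X = 0)) ∧
    ((∀ U : ∀ i, Submodule Fq (Fin (n i) → Fq),
        (∑ i, Module.finrank Fq (U i)) ≤ d - 1 →
        ∀ X ∈ C, (∀ i, colsp (X i) ≤ U i) → X = 0) ↔
      (∀ U : ∀ i, Submodule Fq (Fin (n i) → Fq),
        (∑ i, Module.finrank Fq (U i)) = d - 1 →
        ∀ X ∈ C, (∀ i, colsp (X i) ≤ U i) → X = 0)) := by
  constructor
  · constructor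
    · -- (1) → (2)
      intro h U hU X hXC hXU
      by_contra hX
      have hd : d ≤ srk X := h X hXC hX
      have hle : srk X ≤ ∑ i, Module.finrank Fq (U i) := by
        apply Finset.sum_le_sum
        intro i _
        rw [rank_eq_finrank_colsp]
        exact Submodule.finrank_mono (hXU i)
      omega
    · -- (2) → (1)
      intro h X hXC hX
      by_contra hd
      push_neg at hd
      refine hX (h (fun i => colsp (X i)) ?_ X hXC fun i => le_rfl)
      show (∑ i, Module.finrank Fq (colsp (X i))) ≤ d - 1
      have : (∑ i, Module.finrank Fq (colsp (X i))) = srk X := by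
        unfold srk
        exact Finset.sum_congr rfl fun i _ => (rank_eq_finrank_colsp (X i)).symm
      omega
  · constructor
    · -- (≤) → (=)
      intro h U hU
      exact h U (le_of_eq hU)
    · -- (=) → (≤)
      intro h U hU X hXC hXU
      obtain ⟨V, hUV, hV⟩ := aux_tuple U (d - 1) hU (by omega)
      exact h V hV X hXC fun i => le_trans (hXU i) (hUV i)
end

section
/- Let m = max{m_1,...,m_t} and let C ⊆ Π be a (not necessarily linear) code with |C| ≥ 2 and minimum sum-rank distance d. Then |C| ≤ A_{q^m}(N, d), the maximum cardinality of a code of length N over an alphabet of size q^m with minimum Hamming distance d. In particular |C| ≤ q^{m(N−d+1)}. -/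
open Matrix Finset

/-- `A_Q(N, d)`: the largest cardinality of a (possibly non-linear) code of length `N`
over an alphabet of size `Q` with minimum Hamming distance at least `d`, set to `1` if
no such code (of cardinality at least 2) exists. -/
noncomputable def AQ (Q N d : ℕ) : ℕ :=
  sSup ({1} ∪ {k | ∃ D : Finset (Fin N → Fin Q), D.card = k ∧ 2 ≤ k ∧
    ∀ x ∈ D, ∀ y ∈ D, x ≠ y → d ≤ hammingDist x y})

open scoped Classical in
/-- rank of a matrix is at most the number of nonzero rows -/
lemma rank_le_card_nonzero_rows {K : Type*} [Field K] {a b : ℕ}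
    (A : Matrix (Fin a) (Fin b) K) :
    A.rank ≤ (Finset.univ.filter fun r => A r ≠ 0).card := by
  rw [Matrix.rank_eq_finrank_span_row]
  have hsub : Set.range A ⊆
      insert (0 : Fin b → K)
        ((Finset.univ.filter fun r => A r ≠ 0).image A : Finset (Fin b → K)) := by
    rintro _ ⟨r, rfl⟩
    by_cases h : A r = 0
    · simp [h]
    · right
      simp only [Finset.coe_image, Set.mem_image, Finset.mem_coe, Finset.mem_filter,
        Finset.mem_univ, true_and]
      exact Finset.mem_coe.mpr (Finset.mem_image.mpr ⟨r, by simp [h], rfl⟩)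
  have h1 : Module.finrank K (Submodule.span K (Set.range A))
      ≤ Module.finrank K (Submodule.span K (insert (0 : Fin b → K)
        (((Finset.univ.filter fun r => A r ≠ 0).image A : Finset (Fin b → K)) : Set (Fin b → K)))) :=
    Submodule.finrank_mono (Submodule.span_mono hsub)
  rw [Submodule.span_insert_zero] at h1
  exact le_trans h1 (le_trans (finrank_span_finset_le_card _) Finset.card_image_le)

lemma hammingDist_comp_equiv {α β γ : Type*} [Fintype α] [Fintype β] [DecidableEq γ]
    (e : α ≃ β) (u v : β → γ) : hammingDist (u ∘ e) (v ∘ e) = hammingDist u v := by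
  simp only [hammingDist]
  apply Finset.card_equiv e
  intro i
  simp

/-- Singleton bound for Hamming-metric codes. -/
lemma hamming_singleton_bound {Q N d : ℕ} (hd1 : 1 ≤ d) (hdN : d ≤ N)
    (D : Finset (Fin N → Fin Q))
    (hD : ∀ x ∈ D, ∀ y ∈ D, x ≠ y → d ≤ hammingDist x y) :
    D.card ≤ Q ^ (N - d + 1) := by
  classical
  set k := N - d + 1 with hk
  have hkN : k ≤ N := by omega
  have hinj : Set.InjOn (fun x : Fin N → Fin Q => fun j : Fin k => x (Fin.castLE hkN j)) D := by
    intro x hx y hy hxy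
    by_contra hne
    have hdle := hD x hx y hy hne
    have hsub : (Finset.univ.filter fun j : Fin N => x j ≠ y j) ⊆
        Finset.univ.filter fun j : Fin N => k ≤ (j : ℕ) := by
      intro j hj
      simp only [Finset.mem_filter, Finset.mem_univ, true_and] at hj ⊢
      by_contra h
      push_neg at h
      have h2 := congrFun hxy ⟨(j : ℕ), h⟩
      simp only at h2
      have hcast : Fin.castLE hkN (⟨(j : ℕ), h⟩ : Fin k) = j := by
        apply Fin.ext; rfl
      rw [hcast] at h2
      exact hj h2
    have hcard2 : (Finset.univ.filter fun j : Fin N => k ≤ (j : ℕ)).card ≤ N - k := by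
      by_cases h : k < N
      · have he : (Finset.univ.filter fun j : Fin N => k ≤ (j : ℕ))
            = Finset.Ici (⟨k, h⟩ : Fin N) := by
          ext j
          simp [Fin.le_def]
        rw [he, Fin.card_Ici]
      · have hkN' : k = N := by omega
        have he : (Finset.univ.filter fun j : Fin N => k ≤ (j : ℕ)) = ∅ := by
          ext j
          simp only [Finset.mem_filter, Finset.mem_univ, true_and, Finset.notMem_empty,
            iff_false, not_le, hkN']
          exact j.2
        simp [he]
    have hlt : hammingDist x y ≤ N - k :=
      le_trans (Finset.card_le_card hsub) hcard2
    omega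
  calc D.card = (D.image fun x => fun j : Fin k => x (Fin.castLE hkN j)).card :=
        (Finset.card_image_of_injOn hinj).symm
    _ ≤ Fintype.card (Fin k → Fin Q) := Finset.card_le_univ _
    _ = Q ^ k := by simp [Fintype.card_fun]

/-- induced bounds. If `C ⊆ Π` has `|C| ≥ 2` and minimum sum-rank distance
`d`, and `m = max_i m_i`, then `|C| ≤ A_{q^m}(N, d)`; in particular
`|C| ≤ q^{m(N - d + 1)}` (the induced Singleton bound). -/
theorem induced_bounds (Fq : Type) [Field Fq] [Fintype Fq]
    (t : ℕ) (ht : 1 ≤ t) (n m : Fin t → ℕ) (hnm : ∀ i, 1 ≤ n i ∧ n i ≤ m i)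
    (C : Finset (∀ i, Matrix (Fin (n i)) (Fin (m i)) Fq)) (hC : 2 ≤ C.card)
    (d : ℕ)
    (hd : IsLeast {e | ∃ X ∈ C, ∃ Y ∈ C, X ≠ Y ∧ srk (X - Y) = e} d) :
    C.card ≤ AQ ((Fintype.card Fq) ^ (Finset.univ.sup m)) (∑ i, n i) d ∧
    C.card ≤ (Fintype.card Fq) ^ ((Finset.univ.sup m) * ((∑ i, n i) - d + 1)) := by
  classical
  set M := Finset.univ.sup m with hM
  set q := Fintype.card Fq with hq
  set Q := q ^ M with hQdef
  set N := ∑ i, n i with hN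
  -- the index equivalence
  have hcard : Fintype.card (Σ i, Fin (n i)) = N := by simp [hN]
  let e : (Σ i, Fin (n i)) ≃ Fin N := Fintype.equivFinOfCardEq hcard
  have hcard2 : Fintype.card (Fin M → Fq) = Q := by simp [hQdef, hq, Fintype.card_fun]
  let e2 : (Fin M → Fq) ≃ Fin Q := Fintype.equivFinOfCardEq hcard2
  -- extension of a row to length M
  let ex : ∀ i, (Fin (m i) → Fq) → (Fin M → Fq) := fun i v j =>
    if h : (j : ℕ) < m i then v ⟨j, h⟩ else 0
  have hex_inj : ∀ i, Function.Injective (ex i) := by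
    intro i u v h
    funext r
    have hmi : m i ≤ M := Finset.le_sup (Finset.mem_univ i)
    have := congrFun h ⟨(r : ℕ), lt_of_lt_of_le r.2 hmi⟩
    simpa [ex, r.2] using this
  let g : ∀ i, (Fin (m i) → Fq) → Fin Q := fun i v => e2 (ex i v)
  have hg_inj : ∀ i, Function.Injective (g i) := fun i =>
    e2.injective.comp (hex_inj i)
  -- the injection from Π into (Fin N → Fin Q)
  let f : (∀ i, Matrix (Fin (n i)) (Fin (m i)) Fq) → (Fin N → Fin Q) :=
    fun X => (fun p : Σ i, Fin (n i) => g p.1 (X p.1 p.2)) ∘ e.symm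
  have hf_inj : Function.Injective f := by
    intro X Y h
    funext i
    ext r j
    have h1 := congrFun h (e ⟨i, r⟩)
    simp only [f, Function.comp_apply] at h1
    rw [Equiv.symm_apply_apply] at h1
    exact congrFun (hg_inj i h1) j
  -- the key distance inequality
  have key : ∀ X Y : (∀ i, Matrix (Fin (n i)) (Fin (m i)) Fq),
      srk (X - Y) ≤ hammingDist (f X) (f Y) := by
    intro X Y
    have h1 : hammingDist (f X) (f Y) =
        hammingDist (fun p : Σ i, Fin (n i) => g p.1 (X p.1 p.2))
          (fun p : Σ i, Fin (n i) => g p.1 (Y p.1 p.2)) :=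
      hammingDist_comp_equiv e.symm _ _
    have h2 : hammingDist (fun p : Σ i, Fin (n i) => g p.1 (X p.1 p.2))
        (fun p : Σ i, Fin (n i) => g p.1 (Y p.1 p.2))
        = ∑ i, (Finset.univ.filter fun r => X i r ≠ Y i r).card := by
      rw [hammingDist, ← Finset.card_sigma]
      congr 1
      ext p
      simp [Finset.mem_sigma, (hg_inj p.1).ne_iff]
    rw [h1, h2, srk]
    apply Finset.sum_le_sum
    intro i _
    have hrow : ∀ r, ((X - Y) i) r = X i r - Y i r := by
      intro r; funext j; simp [Matrix.sub_apply]
    have hfe : (Finset.univ.filter fun r => ((X - Y) i) r ≠ 0)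
        = (Finset.univ.filter fun r => X i r ≠ Y i r) := by
      ext r
      simp [hrow, sub_ne_zero]
    refine le_trans (rank_le_card_nonzero_rows ((X - Y) i)) (le_of_eq ?_)
    rw [← hfe]
  -- bounds on d
  obtain ⟨X₀, hX₀, Y₀, hY₀, hXY₀, hsrk₀⟩ := hd.1
  have hd1 : 1 ≤ d := by
    rcases Nat.eq_zero_or_pos d with h0 | h1
    · exfalso
      apply hXY₀
      have hz : ∀ i, ((X₀ - Y₀) i).rank = 0 := by
        have := hsrk₀
        rw [srk, h0, Finset.sum_eq_zero_iff] at this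
        exact fun i => this i (Finset.mem_univ i)
      have hXY0 : X₀ - Y₀ = 0 := by
        funext i
        have hri := hz i
        by_contra hne
        have hne' : (X₀ - Y₀) i ≠ 0 := by
          intro hcon
          apply hne
          exact hcon
        revert hri
        rw [Matrix.rank_eq_finrank_span_row]
        intro h0
        rw [Submodule.finrank_eq_zero] at h0
        apply hne'
        funext r j
        have hmem : ((X₀ - Y₀) i) r ∈ Submodule.span Fq (Set.range ((X₀ - Y₀) i).row) :=
          Submodule.subset_span ⟨r, rfl⟩
        rw [h0, Submodule.mem_bot] at hmem
        exact congrFun hmem j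
      exact sub_eq_zero.mp hXY0
    · exact h1
  have hdN : d ≤ N := by
    rw [← hsrk₀, srk, hN]
    apply Finset.sum_le_sum
    intro i _
    exact le_trans (Matrix.rank_le_card_height _) (by simp)
  -- the image code
  set D : Finset (Fin N → Fin Q) := C.image f with hD
  have hDcard : D.card = C.card := Finset.card_image_of_injective _ hf_inj
  have hDdist : ∀ x ∈ D, ∀ y ∈ D, x ≠ y → d ≤ hammingDist x y := by
    intro x hx y hy hxy
    obtain ⟨X, hX, rfl⟩ := Finset.mem_image.mp hx
    obtain ⟨Y, hY, rfl⟩ := Finset.mem_image.mp hy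
    have hXY : X ≠ Y := fun h => hxy (by rw [h])
    exact le_trans (hd.2 ⟨X, hX, Y, hY, hXY, rfl⟩) (key X Y)
  constructor
  · -- AQ bound
    apply le_csSup
    · refine ⟨Fintype.card (Fin N → Fin Q) + 1, ?_⟩
      rintro k (hk | ⟨D', hD', hk2, _⟩)
      · simp only [Set.mem_singleton_iff] at hk
        omega
      · have := Finset.card_le_univ D'
        omega
    · right
      exact ⟨D, hDcard, hC, hDdist⟩
  · -- Singleton bound
    have := hamming_singleton_bound hd1 hdN D hDdist
    rw [hDcard] at this
    calc C.card ≤ Q ^ (N - d + 1) := this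
      _ = q ^ (M * (N - d + 1)) := by rw [hQdef, ← pow_mul]
end

section
/- Let 0 ≤ r < N and U_r = {(u_1,...,u_t) ∈ N_0^t : 0 ≤ u_i ≤ n_i, Σ u_i = r}. Let j ∈ [t] and 0 ≤ δ ≤ n_j − 1 be the unique integers with r = Σ_{i=1}^{j−1} n_i + δ. If m_1 ≥ m_2 ≥ ... ≥ m_t, then max{Σ_{i=1}^t m_i u_i : (u_1,...,u_t) ∈ U_r} = Σ_{i=1}^{j−1} m_i n_i + m_j δ. -/
open Finset

/-- maximization lemma. For `0 ≤ r < N` and `m_1 ≥ ... ≥ m_t`, the maximum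
of `Σ m_i u_i` over tuples `u` with `0 ≤ u_i ≤ n_i` and `Σ u_i = r` equals
`Σ_{i<j} m_i n_i + m_j δ`, where `r = Σ_{i<j} n_i + δ` with `0 ≤ δ ≤ n_j - 1`. -/
theorem max_weighted_sum (t : ℕ) (n m : Fin t → ℕ)
    (hn : ∀ i, 1 ≤ n i) (hm : ∀ i, 1 ≤ m i)
    (hmono : ∀ i j : Fin t, i ≤ j → m j ≤ m i)
    (r : ℕ) (hr : r < ∑ i, n i)
    (j : Fin t) (δ : ℕ) (hδ : δ ≤ n j - 1)
    (hrj : r = (∑ i ∈ Finset.Iio j, n i) + δ) :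
    IsGreatest {K | ∃ u : Fin t → ℕ, (∀ i, u i ≤ n i) ∧ (∑ i, u i) = r ∧
        K = ∑ i, m i * u i}
      ((∑ i ∈ Finset.Iio j, m i * n i) + m j * δ) := by
  have hδn : δ ≤ n j := hδ.trans (Nat.sub_le _ _)
  have huniv : (Finset.univ : Finset (Fin t)) = Finset.Iio j ∪ Finset.Ici j := by
    ext i; simp [lt_or_ge]
  have hdisj : Disjoint (Finset.Iio j) (Finset.Ici j) := by
    rw [Finset.disjoint_left]; intro a ha hb
    simp only [Finset.mem_Iio] at ha; simp only [Finset.mem_Ici] at hb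
    exact absurd hb (not_le.mpr ha)
  have hsplit : ∀ f : Fin t → ℕ,
      ∑ i, f i = (∑ i ∈ Finset.Iio j, f i) + ∑ i ∈ Finset.Ici j, f i := by
    intro f; rw [huniv, Finset.sum_union hdisj]
  have hIci : Finset.Ici j = insert j (Finset.Ioi j) := by
    ext i; simp [le_iff_lt_or_eq, eq_comm, or_comm]
  constructor
  · refine ⟨fun i => if i < j then n i else if i = j then δ else 0, ?_, ?_, ?_⟩
    · intro i; dsimp only; split_ifs with h1 h2
      · exact le_rfl
      · exact h2 ▸ hδn
      · exact Nat.zero_le _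
    · rw [hsplit, hrj]
      congr 1
      · exact Finset.sum_congr rfl fun i hi => by
          beta_reduce
          rw [if_pos (Finset.mem_Iio.mp hi)]
      · rw [hIci, Finset.sum_insert (by simp)]
        beta_reduce
        rw [if_neg (lt_irrefl j), if_pos rfl]
        rw [Finset.sum_eq_zero fun i hi => by
          have := Finset.mem_Ioi.mp hi
          rw [if_neg (by omega), if_neg (by omega)]]
        omega
    · rw [hsplit]
      congr 1
      · exact Finset.sum_congr rfl fun i hi => by
          beta_reduce
          rw [if_pos (Finset.mem_Iio.mp hi)]
      · rw [hIci, Finset.sum_insert (by simp)]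
        beta_reduce
        rw [if_neg (lt_irrefl j), if_pos rfl]
        rw [Finset.sum_eq_zero fun i hi => by
          have := Finset.mem_Ioi.mp hi
          rw [if_neg (by omega), if_neg (by omega), Nat.mul_zero]]
        omega
  · rintro K ⟨u, hu, hsum, rfl⟩
    have hBle : (∑ i ∈ Finset.Iio j, u i) ≤ ∑ i ∈ Finset.Iio j, n i :=
      Finset.sum_le_sum fun i _ => hu i
    have hIcisum : (∑ i ∈ Finset.Ici j, u i)
        = δ + ((∑ i ∈ Finset.Iio j, n i) - ∑ i ∈ Finset.Iio j, u i) := by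
      have := hsplit u
      omega
    calc ∑ i, m i * u i
        = (∑ i ∈ Finset.Iio j, m i * u i) + ∑ i ∈ Finset.Ici j, m i * u i :=
          hsplit _
      _ ≤ (∑ i ∈ Finset.Iio j, m i * u i) + ∑ i ∈ Finset.Ici j, m j * u i := by
          gcongr with i hi
          exact hmono j i (Finset.mem_Ici.mp hi)
      _ = (∑ i ∈ Finset.Iio j, m i * u i) + m j * ∑ i ∈ Finset.Ici j, u i := by
          rw [Finset.mul_sum]
      _ = (∑ i ∈ Finset.Iio j, m i * u i) + m j * δ
            + m j * ((∑ i ∈ Finset.Iio j, n i) - ∑ i ∈ Finset.Iio j, u i) := by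
          rw [hIcisum, Nat.mul_add]; omega
      _ = (∑ i ∈ Finset.Iio j, m i * u i) + m j * δ
            + ∑ i ∈ Finset.Iio j, m j * (n i - u i) := by
          have hsub : ∑ i ∈ Finset.Iio j, (n i - u i)
              = (∑ i ∈ Finset.Iio j, n i) - ∑ i ∈ Finset.Iio j, u i :=
            Finset.sum_tsub_distrib _ fun i _ => hu i
          rw [← Finset.mul_sum, hsub]
      _ ≤ (∑ i ∈ Finset.Iio j, m i * u i) + m j * δ
            + ∑ i ∈ Finset.Iio j, m i * (n i - u i) := by
          gcongr with i hi
          exact hmono i j (le_of_lt (Finset.mem_Iio.mp hi))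
      _ = (∑ i ∈ Finset.Iio j, m i * n i) + m j * δ := by
          have key : (∑ i ∈ Finset.Iio j, m i * u i)
              + ∑ i ∈ Finset.Iio j, m i * (n i - u i)
              = ∑ i ∈ Finset.Iio j, m i * n i := by
            rw [← Finset.sum_add_distrib]
            exact Finset.sum_congr rfl fun i hi => by
              rw [← Nat.mul_add, Nat.add_sub_cancel' (hu i)]
          omega
end

section
/- Singleton Bound for the sum-rank metric: let C ⊆ Π be a code with |C| ≥ 2 and minimum sum-rank distance d. Let j and δ be the unique integers satisfying d − 1 = Σ_{i=1}^{j−1} n_i + δ with 0 ≤ δ ≤ n_j − 1. Then |C| ≤ q^{Σ_{i=j}^t m_i n_i − m_j δ}. In particular if m_1 = ... = m_t = m then |C| ≤ q^{m(N−d+1)}. -/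
set_option maxHeartbeats 1000000

open Matrix Finset

lemma aux_rank_pos {R : Type} [Field R] {N M : ℕ} (A : Matrix (Fin N) (Fin M) R)
    (h : A ≠ 0) : 0 < A.rank := by
  rw [Matrix.rank]
  have : ∃ r c, A r c ≠ 0 := by
    by_contra hc; push_neg at hc; exact h (by ext r c; exact hc r c)
  obtain ⟨r, c, hrc⟩ := this
  have hmem : A.mulVec (Pi.single c 1) ∈ LinearMap.range A.mulVecLin := ⟨_, rfl⟩
  have hne : A.mulVec (Pi.single c 1) ≠ 0 := by
    intro h0
    have := congrFun h0 r
    simp only [Matrix.mulVec_single, mul_one, Pi.zero_apply, MulOpposite.op_one, one_smul, Matrix.col_apply] at this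
    exact hrc this
  have : Nontrivial (LinearMap.range A.mulVecLin) := by
    refine ⟨⟨⟨_, hmem⟩, 0, ?_⟩⟩
    simp only [ne_eq, Subtype.ext_iff]
    exact hne
  exact Module.finrank_pos

lemma aux_rank_le_of_rows_zero {R : Type} [Field R] {N M : ℕ} (A : Matrix (Fin N) (Fin M) R)
    (δ : ℕ) (h : ∀ r : Fin N, δ ≤ (r : ℕ) → A r = 0) : A.rank ≤ δ := by
  classical
  rw [Matrix.rank_eq_finrank_span_row]
  set S : Set (Fin M → R) := A '' {r : Fin N | (r : ℕ) < δ} with hS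
  have hsub : Set.range A ⊆ insert (0 : Fin M → R) S := by
    rintro - ⟨r, rfl⟩
    by_cases hr : (r : ℕ) < δ
    · exact Set.mem_insert_iff.2 (Or.inr ⟨r, hr, rfl⟩)
    · exact Set.mem_insert_iff.2 (Or.inl (h r (not_lt.1 hr)))
  have hmono := Submodule.span_mono (R := R) hsub
  rw [Submodule.span_insert_zero] at hmono
  have hfin : Module.finrank R (Submodule.span R S) ≤ δ := by
    haveI : Fintype S := (Set.Finite.image A (Set.toFinite _)).fintype
    have hle := finrank_span_le_card (R := R) S
    refine hle.trans ?_
    have : S.toFinset ⊆ Finset.image A (Finset.univ.filter fun r : Fin N => (r : ℕ) < δ) := by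
      intro x hx
      rw [Set.mem_toFinset] at hx
      obtain ⟨r, hr, rfl⟩ := hx
      exact Finset.mem_image.2 ⟨r, by simpa using hr, rfl⟩
    refine (Finset.card_le_card this).trans ?_
    refine Finset.card_image_le.trans ?_
    calc (Finset.univ.filter fun r : Fin N => (r : ℕ) < δ).card
        ≤ (Finset.range δ).card := by
          refine Finset.card_le_card_of_injOn (fun r => (r : ℕ)) ?_ ?_
          · intro r hr; simp at hr; simpa using hr
          · intro a _ b _ hab; exact Fin.ext hab
      _ = δ := Finset.card_range δ
  exact le_trans (Submodule.finrank_mono hmono) hfin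

/-- Singleton bound for the sum-rank metric. If `C ⊆ Π` has `|C| ≥ 2` and
minimum sum-rank distance `d`, and `d - 1 = Σ_{i<j} n_i + δ` with `0 ≤ δ ≤ n_j - 1`,
then `|C| ≤ q^{Σ_{i≥j} m_i n_i - m_j δ}`. In particular if all `m_i = M` then
`|C| ≤ q^{M (N - d + 1)}`. -/
theorem singleton_bound (Fq : Type) [Field Fq] [Fintype Fq]
    (t : ℕ) (n m : Fin t → ℕ) (hnm : ∀ i, 1 ≤ n i ∧ n i ≤ m i)
    (hmono : ∀ i j : Fin t, i ≤ j → m j ≤ m i)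
    (C : Finset (∀ i, Matrix (Fin (n i)) (Fin (m i)) Fq)) (hC : 2 ≤ C.card)
    (d : ℕ)
    (hd : IsLeast {e | ∃ X ∈ C, ∃ Y ∈ C, X ≠ Y ∧ srk (X - Y) = e} d)
    (j : Fin t) (δ : ℕ) (hδ : δ ≤ n j - 1)
    (hdj : d - 1 = (∑ i ∈ Finset.Iio j, n i) + δ) :
    C.card ≤ (Fintype.card Fq) ^ ((∑ i ∈ Finset.Ici j, m i * n i) - m j * δ) ∧
    ∀ M : ℕ, (∀ i, m i = M) →
      C.card ≤ (Fintype.card Fq) ^ (M * ((∑ i, n i) - d + 1)) := by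
  classical
  have hδn : δ ≤ n j - 1 := hδ
  have hnj1 : 1 ≤ n j := (hnm j).1
  have hδnj : δ < n j := by omega
  -- d ≥ 1
  obtain ⟨X₀, hX₀, Y₀, hY₀, hne₀, hsrk₀⟩ := hd.1
  have hd1 : 1 ≤ d := by
    rw [← hsrk₀]
    obtain ⟨i, hi⟩ := Function.ne_iff.1 hne₀
    have hpos : 0 < ((X₀ - Y₀) i).rank := by
      apply aux_rank_pos
      intro h0
      exact hi (sub_eq_zero.1 h0)
    calc 1 ≤ ((X₀ - Y₀) i).rank := hpos
      _ ≤ ∑ k, ((X₀ - Y₀) k).rank :=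
        Finset.single_le_sum (f := fun k => ((X₀ - Y₀) k).rank)
          (fun k _ => Nat.zero_le _) (Finset.mem_univ i)
  -- the punctured index set
  set P : (Σ i : Fin t, Fin (n i) × Fin (m i)) → Prop :=
    fun p => j ≤ p.1 ∧ (p.1 = j → δ ≤ (p.2.1 : ℕ)) with hP
  haveI hPdec : DecidablePred P := fun p => by unfold P; infer_instance
  -- the puncturing map
  set φ : (∀ i, Matrix (Fin (n i)) (Fin (m i)) Fq) → ({p // P p} → Fq) :=
    fun X p => X p.1.1 p.1.2.1 p.1.2.2 with hφ
  -- injectivity on C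
  have hinj : Set.InjOn φ C := by
    intro X hX Y hY hXY
    by_contra hneXY
    have hzero : ∀ i : Fin t, j ≤ i → ∀ r : Fin (n i),
        (i = j → δ ≤ (r : ℕ)) → (X i - Y i) r = 0 := by
      intro i hij r hr
      funext c
      have := congrFun hXY ⟨⟨i, (r, c)⟩, ⟨hij, hr⟩⟩
      simpa [φ, sub_eq_zero] using this
    have hle : srk (X - Y) ≤ (∑ i ∈ Finset.Iio j, n i) + δ := by
      unfold srk
      have huniv : (Finset.univ : Finset (Fin t)) = Finset.Iio j ∪ Finset.Ici j := by
        ext i; simp only [Finset.mem_univ, Finset.mem_union, Finset.mem_Iio, Finset.mem_Ici,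
          true_iff]
        exact lt_or_ge i j
      have hdisj : Disjoint (Finset.Iio j) (Finset.Ici j) := by
        rw [Finset.disjoint_left]; intro a ha hb
        exact absurd (Finset.mem_Ici.1 hb) (not_le.2 (Finset.mem_Iio.1 ha))
      rw [huniv, Finset.sum_union hdisj]
      have h1 : ∑ i ∈ Finset.Iio j, ((X - Y) i).rank ≤ ∑ i ∈ Finset.Iio j, n i := by
        refine Finset.sum_le_sum fun i _ => ?_
        simpa using Matrix.rank_le_height ((X - Y) i)
      have h2 : ∑ i ∈ Finset.Ici j, ((X - Y) i).rank ≤ δ := by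
        rw [← Finset.Ioi_insert, Finset.sum_insert (by simp)]
        have hj : ((X - Y) j).rank ≤ δ := by
          apply aux_rank_le_of_rows_zero
          intro r hr
          have := hzero j le_rfl r (fun _ => hr)
          simpa using this
        have hrest : ∑ i ∈ Finset.Ioi j, ((X - Y) i).rank = 0 := by
          refine Finset.sum_eq_zero fun i hi => ?_
          have hij : j < i := Finset.mem_Ioi.1 hi
          have h00 : X i - Y i = 0 := by
            funext r c
            exact congrFun (hzero i hij.le r (fun h => absurd h.symm hij.ne)) c
          have h01 : (X - Y) i = 0 := by simpa using h00
          rw [h01, Matrix.rank_zero]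
        omega
      omega
    have hdle : d ≤ srk (X - Y) := hd.2 ⟨X, hX, Y, hY, hneXY, rfl⟩
    omega
  -- cardinality bound
  have hcard : C.card ≤ Fintype.card ({p // P p} → Fq) := by
    classical
    refine Finset.card_le_card_of_injOn φ (fun x _ => Finset.mem_univ _) ?_ |>.trans ?_
    · intro a ha b hb hab; exact hinj ha hb hab
    · simp [Finset.card_univ]
  have hcardT : Fintype.card {p // P p} = (∑ i ∈ Finset.Ici j, m i * n i) - m j * δ := by
    -- equiv to a sigma of subtypes
    have e : {p // P p} ≃ Σ i : Fin t, {x : Fin (n i) × Fin (m i) //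
        j ≤ i ∧ (i = j → δ ≤ (x.1 : ℕ))} :=
      { toFun := fun p => ⟨p.1.1, ⟨p.1.2, p.2⟩⟩
        invFun := fun q => ⟨⟨q.1, q.2.1⟩, q.2.2⟩
        left_inv := fun p => rfl
        right_inv := fun q => rfl }
    rw [Fintype.card_congr e, Fintype.card_sigma]
    have hval : ∀ i : Fin t,
        Fintype.card {x : Fin (n i) × Fin (m i) // j ≤ i ∧ (i = j → δ ≤ (x.1 : ℕ))}
        = if i < j then 0 else if i = j then (n j - δ) * m j else n i * m i := by
      intro i
      rcases lt_trichotomy i j with hij | hij | hij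
      · rw [if_pos hij]
        have : IsEmpty {x : Fin (n i) × Fin (m i) // j ≤ i ∧ (i = j → δ ≤ (x.1 : ℕ))} :=
          ⟨fun x => absurd x.2.1 (not_le.2 hij)⟩
        exact Fintype.card_eq_zero
      · subst hij
        rw [if_neg (lt_irrefl i), if_pos rfl]
        have e2 : {x : Fin (n i) × Fin (m i) // i ≤ i ∧ (i = i → δ ≤ (x.1 : ℕ))} ≃
            Fin (n i - δ) × Fin (m i) :=
          { toFun := fun x => (⟨(x.1.1 : ℕ) - δ, by
              have := x.1.1.isLt; have := x.2.2 rfl; omega⟩, x.1.2)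
            invFun := fun y => ⟨(⟨(y.1 : ℕ) + δ, by have := y.1.isLt; omega⟩, y.2),
              ⟨le_rfl, fun _ => by simp⟩⟩
            left_inv := fun x => by
              have := x.2.2 rfl
              ext <;> simp <;> omega
            right_inv := fun y => by ext <;> simp }
        rw [Fintype.card_congr e2]
        simp
      · rw [if_neg (not_lt.2 hij.le), if_neg hij.ne']
        have e3 : {x : Fin (n i) × Fin (m i) // j ≤ i ∧ (i = j → δ ≤ (x.1 : ℕ))} ≃
            Fin (n i) × Fin (m i) :=
          Equiv.subtypeUnivEquiv (fun x => ⟨hij.le, fun h => absurd h hij.ne'⟩)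
        rw [Fintype.card_congr e3]
        simp
    rw [Finset.sum_congr rfl (fun i _ => hval i)]
    have huniv : (Finset.univ : Finset (Fin t)) = Finset.Iio j ∪ Finset.Ici j := by
      ext i; simp only [Finset.mem_univ, Finset.mem_union, Finset.mem_Iio, Finset.mem_Ici,
        true_iff]
      exact lt_or_ge i j
    have hdisj : Disjoint (Finset.Iio j) (Finset.Ici j) := by
      rw [Finset.disjoint_left]; intro a ha hb
      exact absurd (Finset.mem_Ici.1 hb) (not_le.2 (Finset.mem_Iio.1 ha))
    rw [huniv, Finset.sum_union hdisj]
    have h0 : ∑ i ∈ Finset.Iio j,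
        (if i < j then 0 else if i = j then (n j - δ) * m j else n i * m i) = 0 := by
      refine Finset.sum_eq_zero fun i hi => ?_
      rw [if_pos (Finset.mem_Iio.1 hi)]
    rw [h0, zero_add, ← Finset.Ioi_insert, Finset.sum_insert (by simp),
      Finset.sum_insert (by simp)]
    rw [if_neg (lt_irrefl j), if_pos rfl]
    have h1 : ∑ i ∈ Finset.Ioi j,
        (if i < j then 0 else if i = j then (n j - δ) * m j else n i * m i)
        = ∑ i ∈ Finset.Ioi j, m i * n i := by
      refine Finset.sum_congr rfl fun i hi => ?_
      have hij : j < i := Finset.mem_Ioi.1 hi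
      rw [if_neg (not_lt.2 hij.le), if_neg hij.ne', mul_comm]
    rw [h1]
    have hsub : (n j - δ) * m j = n j * m j - δ * m j := Nat.sub_mul _ _ _
    have hle2 : δ * m j ≤ n j * m j := Nat.mul_le_mul_right _ hδnj.le
    have hgen : ∀ a b s : ℕ, b ≤ a → (a - b) + s = a + s - b := by intros; omega
    rw [hsub, mul_comm (m j) (n j), mul_comm (m j) δ, hgen _ _ _ hle2]
  constructor
  · rw [← hcardT]
    calc C.card ≤ Fintype.card ({p // P p} → Fq) := hcard
      _ = Fintype.card Fq ^ Fintype.card {p // P p} := Fintype.card_fun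
  · -- the specialization
    intro M hM
    have key : (∑ i ∈ Finset.Ici j, m i * n i) - m j * δ = M * ((∑ i, n i) - d + 1) := by
      have hsum : ∑ i ∈ Finset.Ici j, m i * n i = M * ∑ i ∈ Finset.Ici j, n i := by
        rw [Finset.mul_sum]
        exact Finset.sum_congr rfl fun i _ => by rw [hM i]
      have hsplit : (∑ i, n i) = (∑ i ∈ Finset.Iio j, n i) + ∑ i ∈ Finset.Ici j, n i := by
        have huniv : (Finset.univ : Finset (Fin t)) = Finset.Iio j ∪ Finset.Ici j := by
          ext i; simp only [Finset.mem_univ, Finset.mem_union, Finset.mem_Iio, Finset.mem_Ici,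
            true_iff]
          exact lt_or_ge i j
        have hdisj : Disjoint (Finset.Iio j) (Finset.Ici j) := by
          rw [Finset.disjoint_left]; intro a ha hb
          exact absurd (Finset.mem_Ici.1 hb) (not_le.2 (Finset.mem_Iio.1 ha))
        rw [huniv, Finset.sum_union hdisj]
      have hnjle : n j ≤ ∑ i ∈ Finset.Ici j, n i :=
        Finset.single_le_sum (fun i _ => Nat.zero_le _) (Finset.mem_Ici.2 le_rfl)
      have heq : (∑ i, n i) - d + 1 = (∑ i ∈ Finset.Ici j, n i) - δ := by omega
      rw [hsum, hM j, ← Nat.mul_sub, heq]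
    rw [← key]
    rw [← hcardT]
    calc C.card ≤ Fintype.card ({p // P p} → Fq) := hcard
      _ = Fintype.card Fq ^ Fintype.card {p // P p} := Fintype.card_fun
end

section
/- Total-Distance Bound: let C ⊆ Π be a code with |C| ≥ 2 and minimum sum-rank distance d, and let Q = Σ_{i=1}^t q^{−m_i}. Then d ≤ N + (t − |C|·Q)/(|C| − 1). In particular, if d > N − Q, then |C| ≤ (d − N + t)/(d − N + Q). -/
open Matrix Finset

lemma rank_le_of_row_zero {K : Type*} [Field K] {nn mm : ℕ}
    (A : Matrix (Fin nn) (Fin mm) K) (i₀ : Fin nn) (h : A i₀ = 0) :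
    A.rank ≤ nn - 1 := by
  classical
  set s : Finset (Fin mm → K) := Finset.image A (Finset.univ.erase i₀) with hs
  have hspan : Submodule.span K (Set.range A) ≤ Submodule.span K (s : Set (Fin mm → K)) := by
    rw [Submodule.span_le]
    rintro _ ⟨i, rfl⟩
    by_cases hi : i = i₀
    · rw [hi, h]; exact Submodule.zero_mem _
    · exact Submodule.subset_span (by rw [hs]; exact Finset.mem_coe.mpr (Finset.mem_image.mpr ⟨i, Finset.mem_erase.mpr ⟨hi, Finset.mem_univ _⟩, rfl⟩))
  haveI hfin : Module.Finite K (Submodule.span K (s : Set (Fin mm → K))) :=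
    FiniteDimensional.span_finset K s
  calc A.rank = Module.finrank K (Submodule.span K (Set.range A)) :=
        A.rank_eq_finrank_span_row
    _ ≤ Module.finrank K (Submodule.span K (s : Set (Fin mm → K))) :=
        Submodule.finrank_mono hspan
    _ ≤ s.card := finrank_span_finset_le_card s
    _ ≤ (Finset.univ.erase i₀).card := Finset.card_image_le
    _ ≤ nn - 1 := by
        rw [Finset.card_erase_of_mem (Finset.mem_univ _), Finset.card_univ, Fintype.card_fin]

/-- Total-distance bound. Let `C ⊆ Π` have `|C| ≥ 2` and minimum sum-rank
distance `d`, and let `Q = Σ q^{-m_i}`. Then `d ≤ N + (t - |C| Q)/(|C| - 1)`, and if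
`d > N - Q` then `|C| ≤ (d - N + t)/(d - N + Q)`. -/
theorem total_distance_bound (Fq : Type) [Field Fq] [Fintype Fq]
    (t : ℕ) (n m : Fin t → ℕ) (hnm : ∀ i, 1 ≤ n i ∧ n i ≤ m i)
    (C : Finset (∀ i, Matrix (Fin (n i)) (Fin (m i)) Fq)) (hC : 2 ≤ C.card)
    (d : ℕ)
    (hd : IsLeast {e | ∃ X ∈ C, ∃ Y ∈ C, X ≠ Y ∧ srk (X - Y) = e} d) :
    ((d : ℚ) ≤ (∑ i, (n i : ℚ)) +
        ((t : ℚ) - (C.card : ℚ) * ∑ i, ((Fintype.card Fq : ℚ) ^ (m i))⁻¹) /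
          ((C.card : ℚ) - 1)) ∧
    ((∑ i, (n i : ℚ)) - (∑ i, ((Fintype.card Fq : ℚ) ^ (m i))⁻¹) < (d : ℚ) →
      (C.card : ℚ) ≤
        ((d : ℚ) - (∑ i, (n i : ℚ)) + (t : ℚ)) /
          ((d : ℚ) - (∑ i, (n i : ℚ)) + ∑ i, ((Fintype.card Fq : ℚ) ^ (m i))⁻¹)) := by
  classical
  set q : ℕ := Fintype.card Fq with hq
  have hq1 : 1 ≤ q := Fintype.card_pos
  set M : ℚ := (C.card : ℚ) with hM
  set N : ℚ := ∑ i, (n i : ℚ) with hN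
  set Q : ℚ := ∑ i, ((q : ℚ) ^ (m i))⁻¹ with hQ
  have hM2 : (2 : ℚ) ≤ M := by rw [hM]; exact_mod_cast hC
  have hM0 : (0 : ℚ) < M := by linarith
  have hM1 : (0 : ℚ) < M - 1 := by linarith
  -- first row of block i
  set r : ∀ i : Fin t, (∀ j, Matrix (Fin (n j)) (Fin (m j)) Fq) → (Fin (m i) → Fq) :=
    fun i X => X i ⟨0, (hnm i).1⟩ with hr
  set χ : Fin t → (∀ j, Matrix (Fin (n j)) (Fin (m j)) Fq) →
      (∀ j, Matrix (Fin (n j)) (Fin (m j)) Fq) → ℚ :=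
    fun i X Y => if r i X = r i Y then 1 else 0 with hχ
  -- rank bound per block
  have hrank : ∀ (X Y : ∀ j, Matrix (Fin (n j)) (Fin (m j)) Fq) (i : Fin t),
      (((X - Y) i).rank : ℚ) ≤ (n i : ℚ) - χ i X Y := by
    intro X Y i
    by_cases hxy : r i X = r i Y
    · have hz : (X - Y) i ⟨0, (hnm i).1⟩ = 0 := by
        funext j
        have := congrFun hxy j
        simp only [hr] at this
        simp [Pi.sub_apply, Matrix.sub_apply, this]
      have h1 := rank_le_of_row_zero ((X - Y) i) ⟨0, (hnm i).1⟩ hz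
      have h2 : (((X - Y) i).rank : ℚ) ≤ ((n i - 1 : ℕ) : ℚ) := by exact_mod_cast h1
      rw [Nat.cast_sub (hnm i).1] at h2
      simp only [hχ, if_pos hxy]
      simpa using h2
    · have h1 : ((X - Y) i).rank ≤ n i := by
        simpa using ((X - Y) i).rank_le_card_height
      simp only [hχ, if_neg hxy, sub_zero]
      exact_mod_cast h1
  -- Cauchy–Schwarz counting bound per block
  have hT : ∀ i : Fin t, M ^ 2 * ((q : ℚ) ^ (m i))⁻¹ ≤ ∑ X ∈ C, ∑ Y ∈ C, χ i X Y := by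
    intro i
    set F : (Fin (m i) → Fq) → ℚ := fun w => ((C.filter fun X => r i X = w).card : ℚ) with hF
    have hsumF : ∑ w : Fin (m i) → Fq, F w = M := by
      rw [hM, hF]
      rw [Finset.card_eq_sum_card_fiberwise (f := r i) (t := Finset.univ)
        (fun x _ => Finset.mem_univ _)]
      push_cast
      rfl
    have hinner : ∀ X ∈ C, ∑ Y ∈ C, χ i X Y = F (r i X) := by
      intro X _
      rw [hF]
      rw [Finset.sum_boole]
      exact congrArg (fun s => ((Finset.card s : ℕ) : ℚ))
        (Finset.filter_congr fun Y _ => eq_comm)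
    have hTsum : ∑ X ∈ C, ∑ Y ∈ C, χ i X Y = ∑ w : Fin (m i) → Fq, F w ^ 2 := by
      rw [Finset.sum_congr rfl hinner]
      rw [← Finset.sum_fiberwise_of_maps_to (g := r i) (t := Finset.univ)
        (fun x _ => Finset.mem_univ _)]
      refine Finset.sum_congr rfl fun w _ => ?_
      have : ∀ X ∈ C.filter fun X => r i X = w, F (r i X) = F w := by
        intro X hX
        rw [(Finset.mem_filter.mp hX).2]
      rw [Finset.sum_congr rfl this, Finset.sum_const, hF]
      push_cast
      ring
    have hcs := sq_sum_le_card_mul_sum_sq (s := (Finset.univ : Finset (Fin (m i) → Fq)))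
      (f := F)
    rw [hsumF, Finset.card_univ, Fintype.card_fun, Fintype.card_fin] at hcs
    have hqpow : (0 : ℚ) < (q : ℚ) ^ (m i) := by positivity
    rw [hTsum]
    rw [mul_inv_le_iff₀ hqpow]
    calc M ^ 2 ≤ (q ^ m i : ℕ) * ∑ w : Fin (m i) → Fq, F w ^ 2 := hcs
      _ = (∑ w : Fin (m i) → Fq, F w ^ 2) * (q : ℚ) ^ (m i) := by push_cast; ring
  -- main counting inequality
  have key : (d : ℚ) * (M * (M - 1)) ≤ N * (M * (M - 1)) + t * M - M ^ 2 * Q := by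
    have hcard1 : 1 ≤ C.card := by omega
    calc (d : ℚ) * (M * (M - 1)) = ∑ X ∈ C, ∑ _Y ∈ C.erase X, (d : ℚ) := by
          rw [Finset.sum_congr rfl (fun X hX => by
            rw [Finset.sum_const, Finset.card_erase_of_mem hX, nsmul_eq_mul,
              Nat.cast_sub hcard1])]
          rw [Finset.sum_const, nsmul_eq_mul]
          push_cast
          ring
      _ ≤ ∑ X ∈ C, ∑ Y ∈ C.erase X, (srk (X - Y) : ℚ) := by
          refine Finset.sum_le_sum fun X hX => Finset.sum_le_sum fun Y hY => ?_
          have hYC := Finset.mem_of_mem_erase hY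
          have hne : X ≠ Y := fun h => (Finset.ne_of_mem_erase hY) h.symm
          exact_mod_cast hd.2 ⟨X, hX, Y, hYC, hne, rfl⟩
      _ ≤ ∑ X ∈ C, ∑ Y ∈ C.erase X, ∑ i, ((n i : ℚ) - χ i X Y) := by
          refine Finset.sum_le_sum fun X _ => Finset.sum_le_sum fun Y _ => ?_
          rw [srk]
          push_cast
          exact Finset.sum_le_sum fun i _ => hrank X Y i
      _ = ∑ X ∈ C, ((M - 1) * N - ((∑ Y ∈ C, ∑ i, χ i X Y) - t)) := by
          refine Finset.sum_congr rfl fun X hX => ?_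
          rw [Finset.sum_erase_eq_sub hX]
          have h1 : ∑ Y ∈ C, ∑ i, ((n i : ℚ) - χ i X Y)
              = M * N - ∑ Y ∈ C, ∑ i, χ i X Y := by
            simp only [Finset.sum_sub_distrib, ← hN, Finset.sum_const, nsmul_eq_mul, ← hM]
          have h2 : ∑ i, ((n i : ℚ) - χ i X X) = N - t := by
            have : ∀ i : Fin t, χ i X X = 1 := fun i => by simp [hχ]
            simp only [this, ← hN, Finset.sum_sub_distrib, Finset.sum_const,
              nsmul_eq_mul, Finset.card_univ, Fintype.card_fin, mul_one]
          rw [h1, h2]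
          ring
      _ = M * ((M - 1) * N) + M * t - ∑ i, ∑ X ∈ C, ∑ Y ∈ C, χ i X Y := by
          have hswap : ∑ X ∈ C, ∑ Y ∈ C, ∑ i, χ i X Y
              = ∑ i, ∑ X ∈ C, ∑ Y ∈ C, χ i X Y := by
            calc ∑ X ∈ C, ∑ Y ∈ C, ∑ i, χ i X Y
                = ∑ X ∈ C, ∑ i, ∑ Y ∈ C, χ i X Y :=
                  Finset.sum_congr rfl fun X _ => Finset.sum_comm
              _ = ∑ i, ∑ X ∈ C, ∑ Y ∈ C, χ i X Y := Finset.sum_comm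
          simp only [Finset.sum_sub_distrib, Finset.sum_const, nsmul_eq_mul, ← hM, hswap]
          ring
      _ ≤ M * ((M - 1) * N) + M * t - M ^ 2 * Q := by
          have : M ^ 2 * Q ≤ ∑ i, ∑ X ∈ C, ∑ Y ∈ C, χ i X Y := by
            rw [hQ, Finset.mul_sum]
            exact Finset.sum_le_sum fun i _ => hT i
          linarith
      _ = N * (M * (M - 1)) + t * M - M ^ 2 * Q := by ring
  have h2 : ((d : ℚ) - N) * (M - 1) ≤ t - M * Q := by
    rw [← mul_le_mul_iff_right₀ hM0]
    nlinarith [key]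
  constructor
  · have h3 : (d : ℚ) - N ≤ (t - M * Q) / (M - 1) := (le_div_iff₀ hM1).2 h2
    linarith
  · intro h
    have hpos : (0 : ℚ) < (d : ℚ) - N + Q := by linarith
    rw [le_div_iff₀ hpos]
    nlinarith [h2]
end

section
/- Sphere-Covering (Gilbert) Bound: for any integer 1 ≤ d ≤ N, let k be the smallest integer with q^k ≥ ⌈|Π| / V_{d−1}(Π)⌉. Then there exists an F_q-linear code C ≤ Π of dimension k and minimum sum-rank distance at least d. -/
open Matrix Finset

/-- The Gaussian (q-)binomial coefficient, via the q-Pascal recursion. -/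
def qBinom (q : ℕ) : ℕ → ℕ → ℕ
  | _, 0 => 1
  | 0, _ + 1 => 0
  | nn + 1, k + 1 => qBinom q nn k + q ^ (k + 1) * qBinom q nn (k + 1)

/-- The volume `V_r(Π)` of a sum-rank ball of radius `r`. -/
def ballVol (q : ℕ) {t : ℕ} (n m : Fin t → ℕ) (r : ℕ) : ℕ :=
  ∑ s ∈ Finset.range (r + 1),
    ∑ sv ∈ (Fintype.piFinset fun _ : Fin t => Finset.range (s + 1)).filter
        (fun sv => (∑ i, sv i) = s),
      ∏ i, qBinom q (n i) (sv i) * ∏ jj ∈ Finset.range (sv i), (q ^ (m i) - q ^ jj)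


section Aux

open Submodule

lemma prodshift (q : ℚ) (a s : ℕ) :
    ∏ j ∈ range (s+1), (q^(a+1) - q^j) =
      (q^(a+1) - 1) * (q^s * ∏ j ∈ range s, (q^a - q^j)) := by
  rw [Finset.prod_range_succ']
  have : ∀ j ∈ range s, q^(a+1) - q^(j+1) = q * (q^a - q^j) := by
    intro j _; ring
  rw [Finset.prod_congr rfl this, Finset.prod_mul_distrib, Finset.prod_const, card_range]
  ring


lemma qBinom_mul_eq (q : ℕ) (nn : ℕ) : ∀ s : ℕ,
    (qBinom q nn s : ℚ) * ∏ j ∈ range s, ((q:ℚ)^s - q^j) =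
      ∏ j ∈ range s, ((q:ℚ)^nn - q^j) := by
  induction nn with
  | zero =>
    intro s
    match s with
    | 0 => simp [qBinom]
    | s+1 =>
      rw [show qBinom q 0 (s+1) = 0 from rfl]
      push_cast
      rw [zero_mul]
      symm
      apply Finset.prod_eq_zero (Finset.mem_range.2 (Nat.succ_pos s))
      simp
  | succ nn ih =>
    intro s
    match s with
    | 0 => simp [qBinom]
    | s+1 =>
      rw [show qBinom q (nn+1) (s+1) = qBinom q nn s + q ^ (s + 1) * qBinom q nn (s+1) from rfl]
      rw [prodshift, prodshift]
      have h1 := ih s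
      have h2 := ih (s+1)
      rw [prodshift, Finset.prod_range_succ] at h2
      push_cast
      push_cast at h1 h2
      linear_combination (((q:ℚ)^(s+1) - 1) * (q:ℚ)^s) * h1 + (q:ℚ)^(s+1) * h2


variable {Fq : Type*} [Field Fq] [Fintype Fq]

lemma rank_smul_ne_zero {N M : Type*} [Fintype N] [Fintype M]
    (A : Matrix N M Fq) {a : Fq} (ha : a ≠ 0) : (a • A).rank = A.rank := by
  have h : (a • A).mulVecLin = a • A.mulVecLin := by
    ext v i
    simp [Matrix.mulVecLin_apply, Matrix.smul_mulVec]
  rw [Matrix.rank, Matrix.rank, h, LinearMap.range_smul _ _ ha]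


lemma card_linIndep_eq (V : Type*) [AddCommGroup V] [Module Fq V] [Finite V]
    (s : ℕ) (hs : s ≤ Module.finrank Fq V) :
    Nat.card { f : Fin s → V // LinearIndependent Fq f } =
      ∏ j ∈ range s, (Fintype.card Fq ^ Module.finrank Fq V - Fintype.card Fq ^ j) := by
  rw [card_linearIndependent hs]
  exact Fin.prod_univ_eq_prod_range (fun j => Fintype.card Fq ^ Module.finrank Fq V - Fintype.card Fq ^ j) s


attribute [local instance] Fintype.ofFinite

lemma cast_prod_sub (q : ℕ) (hq : 1 ≤ q) (a s : ℕ) (hs : s ≤ a) :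
    ((∏ j ∈ range s, (q^a - q^j) : ℕ) : ℚ) = ∏ j ∈ range s, ((q:ℚ)^a - q^j) := by
  rw [Nat.cast_prod]
  refine Finset.prod_congr rfl fun j hj => ?_
  rw [Nat.cast_sub (Nat.pow_le_pow_right hq ((Finset.mem_range.1 hj).le.trans hs))]
  push_cast
  ring

lemma qBinom_mul_eq_nat (q : ℕ) (hq : 1 ≤ q) (N s : ℕ) (hs : s ≤ N) :
    qBinom q N s * ∏ j ∈ range s, (q^s - q^j) = ∏ j ∈ range s, (q^N - q^j) := by
  have := qBinom_mul_eq q N s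
  have h1 := cast_prod_sub q hq s s le_rfl
  have h2 := cast_prod_sub q hq N s hs
  exact_mod_cast h1 ▸ h2 ▸ this

lemma card_subspaces_le (N s : ℕ) (hs : s ≤ N) :
    Nat.card {W : Submodule Fq (Fin N → Fq) // Module.finrank Fq ↥W = s} ≤
      qBinom (Fintype.card Fq) N s := by
  classical
  set q := Fintype.card Fq with hqdef
  have hq : 1 < q := Fintype.one_lt_card
  haveI : Finite (Submodule Fq (Fin N → Fq)) :=
    Finite.of_injective _ (SetLike.coe_injective (A := Submodule Fq (Fin N → Fq)))
  set S := Σ W : {W : Submodule Fq (Fin N → Fq) // Module.finrank Fq ↥W = s},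
      { f : Fin s → ↥W.1 // LinearIndependent Fq f } with hSdef
  have span_eq : ∀ x : S,
      span Fq (Set.range (fun i => ((x.2.1 i : Fin N → Fq)))) = x.1.1 := by
    rintro ⟨⟨W, hW⟩, ⟨f, hf⟩⟩
    have h1 : span Fq (Set.range f) = ⊤ :=
      hf.span_eq_top_of_card_eq_finrank' (by simpa using hW.symm)
    have : (fun i => ((f i : Fin N → Fq))) = W.subtype ∘ f := rfl
    rw [this, Set.range_comp, ← Submodule.map_span, h1, Submodule.map_top,
      Submodule.range_subtype]
  have hι : Function.Injective (fun x : S =>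
      (⟨fun i => ((x.2.1 i : Fin N → Fq)), x.2.2.map' _ (Submodule.ker_subtype x.1.1)⟩ :
        { f : Fin s → (Fin N → Fq) // LinearIndependent Fq f })) := by
    rintro ⟨⟨W, hW⟩, ⟨f, hf⟩⟩ ⟨⟨W', hW'⟩, ⟨f', hf'⟩⟩ h
    have hval : (fun i => ((f i : Fin N → Fq))) = fun i => ((f' i : Fin N → Fq)) :=
      congrArg Subtype.val h
    have hWW : W = W' := by
      have e1 := span_eq ⟨⟨W, hW⟩, ⟨f, hf⟩⟩
      have e2 := span_eq ⟨⟨W', hW'⟩, ⟨f', hf'⟩⟩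
      simp only at e1 e2
      rw [← e1, ← e2, hval]
    subst hWW
    have hff : f = f' := by
      funext i
      exact Subtype.ext (congrFun hval i)
    subst hff
    rfl
  have hcardS : Nat.card S =
      Nat.card {W : Submodule Fq (Fin N → Fq) // Module.finrank Fq ↥W = s} *
        ∏ j ∈ range s, (q^s - q^j) := by
    rw [Nat.card_eq_fintype_card, Fintype.card_sigma]
    have : ∀ W : {W : Submodule Fq (Fin N → Fq) // Module.finrank Fq ↥W = s},
        Fintype.card { f : Fin s → ↥W.1 // LinearIndependent Fq f } =
          ∏ j ∈ range s, (q^s - q^j) := by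
      intro W
      rw [← Nat.card_eq_fintype_card, card_linIndep_eq (Fq := Fq) ↥W.1 s (W.2.symm ▸ le_rfl), W.2]
    rw [Finset.sum_congr rfl (fun W _ => this W), Finset.sum_const, Finset.card_univ,
      Nat.card_eq_fintype_card, smul_eq_mul]
  have hle : Nat.card S ≤ ∏ j ∈ range s, (q^N - q^j) := by
    have := Nat.card_le_card_of_injective _ hι
    rwa [card_linIndep_eq (Fq := Fq) (Fin N → Fq) s (by simpa [Module.finrank_fin_fun] using hs),
      Module.finrank_fin_fun] at this
  rw [hcardS] at hle
  rw [← qBinom_mul_eq_nat q hq.le N s hs] at hle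
  have hP : 0 < ∏ j ∈ range s, (q^s - q^j) := by
    apply Finset.prod_pos
    intro j hj
    exact Nat.sub_pos_of_lt (Nat.pow_lt_pow_right hq (Finset.mem_range.1 hj))
  exact Nat.le_of_mul_le_mul_right hle hP

lemma card_fullrank_le (s M : ℕ) (hsM : s ≤ M) :
    Nat.card {C : Matrix (Fin s) (Fin M) Fq // C.rank = s} ≤
      ∏ j ∈ range s, (Fintype.card Fq ^ M - Fintype.card Fq ^ j) := by
  classical
  have key : ∀ C : Matrix (Fin s) (Fin M) Fq, C.rank = s → LinearIndependent Fq C := by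
    intro C hC
    change LinearIndependent Fq C.row
    rw [linearIndependent_iff_card_eq_finrank_span]
    rw [Matrix.rank_eq_finrank_span_row] at hC
    simpa [Set.finrank] using hC.symm
  have hinj : Function.Injective
      (fun C : {C : Matrix (Fin s) (Fin M) Fq // C.rank = s} =>
        (⟨C.1, key C.1 C.2⟩ : { f : Fin s → (Fin M → Fq) // LinearIndependent Fq f })) := by
    intro C C' h
    have h2 := congrArg Subtype.val h
    exact Subtype.ext h2
  have := Nat.card_le_card_of_injective _ hinj
  rwa [card_linIndep_eq (Fq := Fq) (Fin M → Fq) s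
    (by simpa [Module.finrank_fin_fun] using hsM), Module.finrank_fin_fun] at this

lemma card_rank_eq_le (N M s : ℕ) (hNM : N ≤ M) :
    Nat.card {A : Matrix (Fin N) (Fin M) Fq // A.rank = s} ≤
      qBinom (Fintype.card Fq) N s *
        ∏ j ∈ range s, (Fintype.card Fq ^ M - Fintype.card Fq ^ j) := by
  classical
  by_cases hs : s ≤ N
  swap
  · have : IsEmpty {A : Matrix (Fin N) (Fin M) Fq // A.rank = s} := by
      refine ⟨fun A => hs ?_⟩
      rw [← A.2]
      exact A.1.rank_le_height
    simp [Nat.card_of_isEmpty]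
  let Sub := {W : Submodule Fq (Fin N → Fq) // Module.finrank Fq ↥W = s}
  let e : ∀ W : Sub, ↥W.1 ≃ₗ[Fq] (Fin s → Fq) :=
    fun W => Module.Basis.equivFun (Module.finBasisOfFinrankEq Fq ↥W.1 W.2)
  let WA : {A : Matrix (Fin N) (Fin M) Fq // A.rank = s} → Sub := fun A =>
    ⟨span Fq (Set.range A.1ᵀ), by exact (Matrix.rank_eq_finrank_span_cols A.1).symm.trans A.2⟩
  let col : ∀ A : {A : Matrix (Fin N) (Fin M) Fq // A.rank = s}, Fin M → ↥(WA A).1 :=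
    fun A k => ⟨A.1ᵀ k, Submodule.subset_span (Set.mem_range_self k)⟩
  let Cmat : ∀ A : {A : Matrix (Fin N) (Fin M) Fq // A.rank = s},
      Matrix (Fin s) (Fin M) Fq := fun A j k => e (WA A) (col A k) j
  have hspan : ∀ A, span Fq (Set.range (col A)) = ⊤ := by
    intro A
    apply Submodule.map_injective_of_injective (Submodule.injective_subtype (WA A).1)
    rw [Submodule.map_span, ← Set.range_comp]
    have h1 : ((WA A).1.subtype ∘ col A) = A.1ᵀ := rfl
    rw [h1, Submodule.map_top, Submodule.range_subtype]
  have hrank : ∀ A, (Cmat A).rank = s := by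
    intro A
    rw [Matrix.rank_eq_finrank_span_cols]
    have h1 : Set.range (Cmat A).col =
        ((e (WA A) : ↥(WA A).1 →ₗ[Fq] (Fin s → Fq))) '' Set.range (col A) := by
      rw [← Set.range_comp]; rfl
    rw [h1, ← Submodule.map_span, hspan, Submodule.map_top]
    have h2 : LinearMap.range (e (WA A) : ↥(WA A).1 →ₗ[Fq] (Fin s → Fq)) = ⊤ := LinearEquiv.range _
    rw [h2, finrank_top, Module.finrank_fin_fun]
  have hrec : ∀ (A : {A : Matrix (Fin N) (Fin M) Fq // A.rank = s}) (k : Fin M),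
      A.1ᵀ k = ((e (WA A)).symm (fun j => Cmat A j k) : ↥(WA A).1).val := by
    intro A k
    have h1 : (fun j => Cmat A j k) = e (WA A) (col A k) := rfl
    rw [h1, LinearEquiv.symm_apply_apply]
  have hinj : Function.Injective (fun A : {A : Matrix (Fin N) (Fin M) Fq // A.rank = s} =>
      ((WA A, ⟨Cmat A, hrank A⟩) : Sub × {C : Matrix (Fin s) (Fin M) Fq // C.rank = s})) := by
    intro A A' h
    have hW : WA A = WA A' := congrArg Prod.fst h
    have hC : Cmat A = Cmat A' :=
      congrArg (fun p : Sub × {C : Matrix (Fin s) (Fin M) Fq // C.rank = s} => p.2.1) h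
    apply Subtype.ext
    rw [← Matrix.transpose_inj]
    funext k
    rw [hrec A k, hrec A' k, hC, hW]
  have hcard := Nat.card_le_card_of_injective _ hinj
  rw [Nat.card_prod] at hcard
  calc Nat.card {A : Matrix (Fin N) (Fin M) Fq // A.rank = s}
      ≤ Nat.card Sub * Nat.card {C : Matrix (Fin s) (Fin M) Fq // C.rank = s} := hcard
    _ ≤ _ := Nat.mul_le_mul (card_subspaces_le N s hs)
        (card_fullrank_le s M (hs.trans hNM))

lemma srk_ball_card_le (t : ℕ) (n m : Fin t → ℕ) (hnm : ∀ i, n i ≤ m i) (r : ℕ) :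
    ((univ : Finset (∀ i, Matrix (Fin (n i)) (Fin (m i)) Fq)).filter
      (fun X => srk X ≤ r)).card ≤ ballVol (Fintype.card Fq) n m r := by
  classical
  rw [ballVol]
  have hA : ((univ : Finset (∀ i, Matrix (Fin (n i)) (Fin (m i)) Fq)).filter
      (fun X => srk X ≤ r)) =
      (range (r+1)).biUnion (fun s => univ.filter fun X => srk X = s) := by
    ext X
    simp [Nat.lt_succ_iff]
  rw [hA, Finset.card_biUnion (by
    intro x _ y _ hxy
    simp only [Finset.disjoint_left, Finset.mem_filter]
    rintro X ⟨-, h1⟩ ⟨-, h2⟩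
    exact hxy (h1 ▸ h2 ▸ rfl))]
  apply Finset.sum_le_sum
  intro s hs
  have hB : ((univ : Finset (∀ i, Matrix (Fin (n i)) (Fin (m i)) Fq)).filter
      (fun X => srk X = s)) =
      ((Fintype.piFinset fun _ : Fin t => Finset.range (s + 1)).filter
        (fun sv => (∑ i, sv i) = s)).biUnion
        (fun sv => univ.filter fun X => ∀ i, (X i).rank = sv i) := by
    ext X
    simp only [Finset.mem_filter, Finset.mem_univ, true_and, Finset.mem_biUnion,
      Fintype.mem_piFinset, Finset.mem_range, Nat.lt_succ_iff]
    constructor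
    · intro hX
      refine ⟨fun i => (X i).rank, ⟨fun i => ?_, ?_⟩, fun i => rfl⟩
      · rw [← hX, srk]
        exact Finset.single_le_sum (f := fun i => (X i).rank)
          (fun j _ => Nat.zero_le _) (Finset.mem_univ i)
      · exact hX
    · rintro ⟨sv, ⟨-, hsum⟩, hrk⟩
      rw [srk]
      rw [Finset.sum_congr rfl (fun i _ => hrk i)]
      exact hsum
  rw [hB, Finset.card_biUnion (by
    intro x hx y hy hxy
    simp only [Finset.disjoint_left, Finset.mem_filter]
    rintro X ⟨-, h1⟩ ⟨-, h2⟩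
    exact hxy (funext fun i => (h1 i).symm.trans (h2 i)))]
  apply Finset.sum_le_sum
  intro sv hsv
  have hprod : ((univ : Finset (∀ i, Matrix (Fin (n i)) (Fin (m i)) Fq)).filter
      (fun X => ∀ i, (X i).rank = sv i)).card =
      ∏ i, Nat.card {A : Matrix (Fin (n i)) (Fin (m i)) Fq // A.rank = sv i} := by
    rw [← Fintype.card_subtype]
    rw [Fintype.card_congr (Equiv.subtypePiEquivPi
      (p := fun i (A : Matrix (Fin (n i)) (Fin (m i)) Fq) => A.rank = sv i))]
    rw [Fintype.card_pi]
    exact Finset.prod_congr rfl fun i _ => (Nat.card_eq_fintype_card).symm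
  rw [hprod]
  exact Finset.prod_le_prod' fun i _ => card_rank_eq_le (n i) (m i) (sv i) (hnm i)


end Aux

/-- Sphere-covering (Gilbert) bound. For `1 ≤ d ≤ N`, if `k` is the
smallest integer with `q^k ≥ |Π| / V_{d-1}(Π)`, then there exists a linear code
`C ≤ Π` of dimension `k` and minimum sum-rank distance at least `d`. -/
theorem sphere_covering_bound (Fq : Type) [Field Fq] [Fintype Fq]
    (t : ℕ) (n m : Fin t → ℕ) (hnm : ∀ i, 1 ≤ n i ∧ n i ≤ m i)
    (d : ℕ) (hd1 : 1 ≤ d) (hdN : d ≤ ∑ i, n i) (k : ℕ)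
    (hk : IsLeast {k' : ℕ |
      (Fintype.card (∀ i, Matrix (Fin (n i)) (Fin (m i)) Fq) : ℚ) /
        (ballVol (Fintype.card Fq) n m (d - 1) : ℚ) ≤ (Fintype.card Fq : ℚ) ^ k'} k) :
    ∃ C : Submodule Fq (∀ i, Matrix (Fin (n i)) (Fin (m i)) Fq),
      Module.finrank Fq C = k ∧ ∀ X ∈ C, X ≠ 0 → d ≤ srk X := by
  classical
  set q := Fintype.card Fq with hq
  set Pi' := ∀ i, Matrix (Fin (n i)) (Fin (m i)) Fq with hPi
  set V := ballVol q n m (d - 1) with hVdef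
  have hq1 : 1 < q := Fintype.one_lt_card
  -- ballVol positive
  have hV1 : 1 ≤ V := by
    rw [hVdef, ballVol]
    refine le_trans ?_ (Finset.single_le_sum (f := fun s =>
      ∑ sv ∈ (Fintype.piFinset fun _ : Fin t => Finset.range (s + 1)).filter
        (fun sv => (∑ i, sv i) = s),
      ∏ i, qBinom q (n i) (sv i) * ∏ jj ∈ Finset.range (sv i), (q ^ (m i) - q ^ jj))
      (fun _ _ => Nat.zero_le _) (Finset.mem_range.2 (Nat.succ_pos _)))
    have hsv : (fun _ : Fin t => 0) ∈ (Fintype.piFinset fun _ : Fin t =>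
        Finset.range (0 + 1)).filter (fun sv => (∑ i, sv i) = 0) := by
      simp
    refine le_trans ?_ (Finset.single_le_sum (fun _ _ => Nat.zero_le _) hsv)
    simp [qBinom]
  -- numeric fact
  have hnum : ∀ j, j < k → q ^ j * V < Fintype.card Pi' := by
    intro j hj
    have hjS : ¬ ((Fintype.card Pi' : ℚ) / (V : ℚ) ≤ (q : ℚ) ^ j) := by
      intro hin
      have := hk.2 hin
      omega
    push_neg at hjS
    have hVpos : (0:ℚ) < (V : ℚ) := by exact_mod_cast hV1
    rw [lt_div_iff₀ hVpos] at hjS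
    exact_mod_cast hjS
  -- translation invariant ball bound
  have hball : ∀ c : Pi', ((univ : Finset Pi').filter
      (fun X => srk (X - c) ≤ d - 1)).card ≤ V := by
    intro c
    have hcardeq : ((univ : Finset Pi').filter (fun X => srk (X - c) ≤ d - 1)).card
        = ((univ : Finset Pi').filter (fun X => srk X ≤ d - 1)).card := by
      apply Finset.card_bij' (fun X _ => X - c) (fun X _ => X + c)
      · intro X hX
        simpa using (Finset.mem_filter.1 hX).2
      · intro X hX
        simp only [Finset.mem_filter, Finset.mem_univ, true_and]
        simpa using (Finset.mem_filter.1 hX).2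
      · intro X _; simp
      · intro X _; simp
    rw [hcardeq]
    exact srk_ball_card_le t n m (fun i => (hnm i).2) (d - 1)
  -- srk is scaling invariant
  have hsmul : ∀ (X : Pi') (a : Fq), a ≠ 0 → srk (a • X) = srk X := by
    intro X a ha
    rw [srk, srk]
    exact Finset.sum_congr rfl fun i _ => rank_smul_ne_zero (X i) ha
  -- main induction
  have main : ∀ j, j ≤ k → ∃ C : Submodule Fq Pi',
      Module.finrank Fq C = j ∧ ∀ X ∈ C, X ≠ 0 → d ≤ srk X := by
    intro j
    induction j with
    | zero =>
      intro _
      refine ⟨⊥, finrank_bot Fq Pi', ?_⟩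
      intro X hX hX0
      exact absurd (by simpa using hX) hX0
    | succ j ih =>
      intro hjk
      obtain ⟨C, hCrk, hdist⟩ := ih (le_trans (Nat.le_succ j) hjk)
      set cov := (univ : Finset Pi').filter (fun X => ∃ c ∈ C, srk (X - c) ≤ d - 1)
        with hcov
      have hsub : cov ⊆ (C : Set Pi').toFinset.biUnion
          (fun c => (univ : Finset Pi').filter (fun X => srk (X - c) ≤ d - 1)) := by
        intro X hX
        obtain ⟨-, c, hc, hsrk⟩ := Finset.mem_filter.1 hX
        exact Finset.mem_biUnion.2 ⟨c, Set.mem_toFinset.2 hc,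
          Finset.mem_filter.2 ⟨Finset.mem_univ X, hsrk⟩⟩
      have hcovcard : cov.card ≤ q ^ j * V := by
        calc cov.card ≤ _ := Finset.card_le_card hsub
          _ ≤ ∑ c ∈ (C : Set Pi').toFinset, ((univ : Finset Pi').filter
              (fun X => srk (X - c) ≤ d - 1)).card := Finset.card_biUnion_le
          _ ≤ ∑ _c ∈ (C : Set Pi').toFinset, V := Finset.sum_le_sum fun c _ => hball c
          _ = (C : Set Pi').toFinset.card * V := by rw [Finset.sum_const, smul_eq_mul]
          _ = q ^ j * V := by
              rw [Set.toFinset_card]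
              congr 1
              rw [← hCrk]
              exact Module.card_eq_pow_finrank (K := Fq) (V := ↥C)
      have hlt : cov.card < Fintype.card Pi' :=
        lt_of_le_of_lt hcovcard (hnum j (by omega))
      have hex : ∃ x : Pi', x ∉ cov := by
        by_contra hcon
        push_neg at hcon
        have h1 : (univ : Finset Pi') ⊆ cov := fun x _ => hcon x
        have := Finset.card_le_card h1
        rw [Finset.card_univ] at this
        omega
      obtain ⟨x, hx⟩ := hex
      have hxprop : ∀ c ∈ C, d ≤ srk (x - c) := by
        intro c hc
        by_contra hlt'
        push_neg at hlt'
        exact hx (Finset.mem_filter.2 ⟨Finset.mem_univ x, ⟨c, hc, by omega⟩⟩)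
      have hxC : x ∉ C := by
        intro hmem
        have h1 := hxprop x hmem
        simp only [sub_self] at h1
        have h2 : srk (0 : Pi') = 0 := by
          rw [srk]
          apply Finset.sum_eq_zero
          intro i _
          exact Matrix.rank_zero
        omega
      have hx0 : x ≠ 0 := fun h0 => hxC (h0 ▸ C.zero_mem)
      have hdisj : C ⊓ (Fq ∙ x) = ⊥ := by
        rw [eq_bot_iff]
        intro y hy
        obtain ⟨hyC, hyx⟩ := Submodule.mem_inf.1 hy
        obtain ⟨a, rfl⟩ := Submodule.mem_span_singleton.1 hyx
        rcases eq_or_ne a 0 with rfl | ha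
        · simp
        · have h3 : a⁻¹ • (a • x) ∈ C := C.smul_mem _ hyC
          rw [smul_smul, inv_mul_cancel₀ ha, one_smul] at h3
          exact absurd h3 hxC
      refine ⟨C ⊔ (Fq ∙ x), ?_, ?_⟩
      · have h1 := Submodule.finrank_sup_add_finrank_inf_eq C (Fq ∙ x)
        rw [hdisj, hCrk, finrank_span_singleton hx0, finrank_bot] at h1
        omega
      · intro X hX hX0
        obtain ⟨c, hc, z, hz, rfl⟩ := Submodule.mem_sup.1 hX
        obtain ⟨a, rfl⟩ := Submodule.mem_span_singleton.1 hz
        rcases eq_or_ne a 0 with rfl | ha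
        · simp only [zero_smul, add_zero] at hX0 ⊢
          exact hdist c hc hX0
        · have heq : srk (c + a • x) = srk (x - (-(a⁻¹) • c)) := by
            have h2 : x - (-(a⁻¹) • c) = a⁻¹ • (c + a • x) := by
              rw [smul_add, smul_smul, inv_mul_cancel₀ ha, one_smul, neg_smul, sub_neg_eq_add,
                add_comm]
            rw [h2, hsmul _ _ (inv_ne_zero ha)]
          rw [heq]
          exact hxprop _ (C.smul_mem (-(a⁻¹)) hc)
  exact main k le_rfl
end

section
/- Duality of shortening: let C ≤ Π be F_q-linear and U = (U_1,...,U_t) with U_i ≤ F_q^{n_i} of dimension u_i. Then |C(U)| = (|C| / q^{Σ_{i=1}^t m_i(n_i − u_i)}) · |C⊥(U⊥)|, where C(U) = {X ∈ C : colsp(X_i) ⊆ U_i for all i}, C⊥ is the trace-product dual, and U⊥ = (U_1⊥,...,U_t⊥). -/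
open Matrix Finset

/-- The shortening `C(U)` of a code on a tuple of subspaces `U`. -/
def shorten {Fq : Type*} [Field Fq] {t : ℕ} {n m : Fin t → ℕ}
    (C : Set (∀ i, Matrix (Fin (n i)) (Fin (m i)) Fq))
    (U : ∀ i, Submodule Fq (Fin (n i) → Fq)) :
    Set (∀ i, Matrix (Fin (n i)) (Fin (m i)) Fq) :=
  {X ∈ C | ∀ i, colsp (X i) ≤ U i}

/-- The trace-product dual of a code. -/
def dualSet {Fq : Type*} [Field Fq] {t : ℕ} {n m : Fin t → ℕ}
    (C : Set (∀ i, Matrix (Fin (n i)) (Fin (m i)) Fq)) :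
    Set (∀ i, Matrix (Fin (n i)) (Fin (m i)) Fq) :=
  {Y | ∀ X ∈ C, (∑ i, Matrix.trace (X i * (Y i)ᵀ)) = 0}

/-- The orthogonal complement with respect to the standard inner product on `Fq^n`. -/
def orthComp {Fq : Type*} [Field Fq] {a : ℕ} (U : Submodule Fq (Fin a → Fq)) :
    Submodule Fq (Fin a → Fq) where
  carrier := {v | ∀ u ∈ U, (∑ j, u j * v j) = 0}
  add_mem' := by
    intro x y hx hy u hu
    simp only [Set.mem_setOf_eq] at hx hy
    simp only [Pi.add_apply, mul_add, Finset.sum_add_distrib, hx u hu, hy u hu, add_zero]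
  zero_mem' := by
    intro u hu
    simp
  smul_mem' := by
    intro c x hx u hu
    simp only [Set.mem_setOf_eq] at hx
    simp only [Pi.smul_apply, smul_eq_mul]
    calc (∑ j, u j * (c * x j)) = c * ∑ j, u j * x j := by
          rw [Finset.mul_sum]; exact Finset.sum_congr rfl fun j _ => by ring
      _ = 0 := by rw [hx u hu, mul_zero]

section Aux

variable {Fq : Type*} [Field Fq]

lemma colsp_le_iff {a b : ℕ} (X : Matrix (Fin a) (Fin b) Fq) (W : Submodule Fq (Fin a → Fq)) :
    colsp X ≤ W ↔ ∀ j, (fun k => X k j) ∈ W := by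
  constructor
  · intro h j
    apply h
    exact ⟨Pi.single j 1, by ext k; simp [Matrix.mulVecLin_apply]⟩
  · intro h v hv
    obtain ⟨w, rfl⟩ := hv
    have hrepr : X.mulVecLin w = ∑ j, w j • (fun k => X k j) := by
      ext k
      simp [Matrix.mulVecLin_apply, Matrix.mulVec, dotProduct, Finset.sum_apply, mul_comm]
    rw [hrepr]
    exact Submodule.sum_mem _ fun j _ => W.smul_mem _ (h j)

def colSub {a b : ℕ} (W : Submodule Fq (Fin a → Fq)) :
    Submodule Fq (Matrix (Fin a) (Fin b) Fq) where
  carrier := {X | ∀ j, (fun k => X k j) ∈ W}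
  add_mem' := fun hx hy j => W.add_mem (hx j) (hy j)
  zero_mem' := fun j => W.zero_mem
  smul_mem' := fun c X hX j => W.smul_mem c (hX j)

lemma mem_colSub {a b : ℕ} {W : Submodule Fq (Fin a → Fq)} {X : Matrix (Fin a) (Fin b) Fq} :
    X ∈ (colSub W : Submodule Fq (Matrix (Fin a) (Fin b) Fq)) ↔ ∀ j, (fun k => X k j) ∈ W :=
  Iff.rfl

variable {t : ℕ} {n m : Fin t → ℕ}

def piSub (W : ∀ i, Submodule Fq (Fin (n i) → Fq)) :
    Submodule Fq (∀ i, Matrix (Fin (n i)) (Fin (m i)) Fq) :=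
  Submodule.pi Set.univ fun i => colSub (W i)

lemma mem_piSub {W : ∀ i, Submodule Fq (Fin (n i) → Fq)}
    {X : ∀ i, Matrix (Fin (n i)) (Fin (m i)) Fq} :
    X ∈ (piSub W : Submodule Fq (∀ i, Matrix (Fin (n i)) (Fin (m i)) Fq)) ↔
      ∀ i, colsp (X i) ≤ W i := by
  rw [piSub, Submodule.mem_pi]
  constructor
  · intro h i
    exact (colsp_le_iff _ _).2 (h i (Set.mem_univ i))
  · intro h i _
    exact (colsp_le_iff _ _).1 (h i)

noncomputable def piSubEquiv (W : ∀ i, Submodule Fq (Fin (n i) → Fq)) :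
    ↥(piSub W : Submodule Fq (∀ i, Matrix (Fin (n i)) (Fin (m i)) Fq)) ≃
      ∀ i, Fin (m i) → ↥(W i) where
  toFun X i j := ⟨fun k => X.1 i k j, X.2 i (Set.mem_univ i) j⟩
  invFun F := ⟨fun i => Matrix.of fun k j => (F i j).1 k, fun i _ j => (F i j).2⟩
  left_inv X := rfl
  right_inv F := rfl

lemma card_piSub (W : ∀ i, Submodule Fq (Fin (n i) → Fq)) :
    Nat.card ↥(piSub W : Submodule Fq (∀ i, Matrix (Fin (n i)) (Fin (m i)) Fq)) =
      ∏ i, Nat.card ↥(W i) ^ m i := by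
  rw [Nat.card_congr (piSubEquiv W), Nat.card_pi]
  refine Finset.prod_congr rfl fun i _ => ?_
  rw [Nat.card_pi, Finset.prod_const, Finset.card_univ, Fintype.card_fin]

end Aux
open Matrix Finset
section Aux2
variable {Fq : Type*} [Field Fq]

lemma trace_mul_transpose' {a b : ℕ} (X Y : Matrix (Fin a) (Fin b) Fq) :
    (X * Yᵀ).trace = ∑ k, ∑ l, X k l * Y k l := by
  simp [Matrix.trace, Matrix.diag, Matrix.mul_apply]

variable {t : ℕ} {n m : Fin t → ℕ}

noncomputable def traceForm :
    (∀ i, Matrix (Fin (n i)) (Fin (m i)) Fq) →ₗ[Fq]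
      Module.Dual Fq (∀ i, Matrix (Fin (n i)) (Fin (m i)) Fq) :=
  (LinearMap.mk₂ Fq
    (fun X Y : ∀ i, Matrix (Fin (n i)) (Fin (m i)) Fq => ∑ i, ((X i) * (Y i)ᵀ).trace)
    (by intro X X' Y; simp [Matrix.add_mul, Finset.sum_add_distrib])
    (by intro c X Y; simp [Matrix.smul_mul, Finset.mul_sum])
    (by intro X Y Y'; simp [Matrix.mul_add, Finset.sum_add_distrib])
    (by intro c X Y; simp [Matrix.mul_smul, Finset.mul_sum])).flip

@[simp] lemma traceForm_apply (Y X : ∀ i, Matrix (Fin (n i)) (Fin (m i)) Fq) :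
    traceForm Y X = ∑ i, ((X i) * (Y i)ᵀ).trace := rfl

lemma traceForm_injective :
    Function.Injective (traceForm : (∀ i, Matrix (Fin (n i)) (Fin (m i)) Fq) →ₗ[Fq] _) := by
  rw [← LinearMap.ker_eq_bot, LinearMap.ker_eq_bot']
  intro Y h
  funext i
  ext k l
  have h0 := LinearMap.congr_fun h (Pi.single i (Matrix.single k l 1))
  simp only [traceForm_apply, LinearMap.zero_apply] at h0
  rw [Finset.sum_eq_single i] at h0
  · rw [Pi.single_eq_same, trace_mul_transpose'] at h0
    simpa [Matrix.single, Matrix.of_apply, ite_and, boole_mul] using h0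
  · intro i' _ hne
    rw [Pi.single_eq_of_ne hne]
    simp
  · intro habs
    exact absurd (Finset.mem_univ i) habs

end Aux2

section Key
variable {Fq : Type*} [Field Fq] {t : ℕ} {n m : Fin t → ℕ}

lemma mem_orthComp {a : ℕ} {U : Submodule Fq (Fin a → Fq)} {v : Fin a → Fq} :
    v ∈ orthComp U ↔ ∀ u ∈ U, (∑ j, u j * v j) = 0 := Iff.rfl

lemma comap_dualAnn_piSub (U : ∀ i, Submodule Fq (Fin (n i) → Fq)) :
    Submodule.comap traceForm
        ((piSub U : Submodule Fq (∀ i, Matrix (Fin (n i)) (Fin (m i)) Fq)).dualAnnihilator) =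
      piSub (fun i => orthComp (U i)) := by
  classical
  ext Y
  rw [Submodule.mem_comap, Submodule.mem_dualAnnihilator, mem_piSub]
  constructor
  · intro h i
    rw [colsp_le_iff]
    intro j
    rw [mem_orthComp]
    intro u hu
    set X : ∀ i', Matrix (Fin (n i')) (Fin (m i')) Fq :=
      Pi.single i (Matrix.of fun k l => if l = j then u k else 0) with hXdef
    have hX : X ∈ (piSub U : Submodule Fq (∀ i, Matrix (Fin (n i)) (Fin (m i)) Fq)) := by
      rw [mem_piSub]
      intro i'
      rcases eq_or_ne i' i with rfl | hne
      · rw [colsp_le_iff]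
        intro j'
        simp only [hXdef, Pi.single_eq_same, Matrix.of_apply]
        by_cases hj : j' = j
        · simpa [hj] using hu
        · simp only [hj, if_false]
          exact (U _).zero_mem
      · rw [colsp_le_iff]
        intro j'
        simp only [hXdef, Pi.single_eq_of_ne hne, Matrix.zero_apply]
        exact (U i').zero_mem
    have h0 := h X hX
    rw [traceForm_apply, Finset.sum_eq_single i] at h0
    · rw [trace_mul_transpose'] at h0
      simp only [hXdef, Pi.single_eq_same, Matrix.of_apply, ite_mul, zero_mul] at h0
      simpa [Finset.sum_ite_eq' Finset.univ j] using h0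
    · intro i' _ hne
      rw [hXdef, Pi.single_eq_of_ne hne]
      simp
    · intro habs; exact absurd (Finset.mem_univ i) habs
  · intro h X hX
    rw [traceForm_apply]
    refine Finset.sum_eq_zero fun i _ => ?_
    rw [trace_mul_transpose', Finset.sum_comm]
    refine Finset.sum_eq_zero fun l _ => ?_
    have hYc : (fun k => Y i k l) ∈ orthComp (U i) := (colsp_le_iff _ _).1 (h i) l
    have hXc : (fun k => X i k l) ∈ U i := (colsp_le_iff _ _).1 ((mem_piSub.1 hX) i) l
    exact hYc _ hXc

end Key

section Count
variable {Fq : Type*} [Field Fq] [Fintype Fq]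

lemma card_submodule {M : Type*} [AddCommGroup M] [Module Fq M] [Fintype M]
    (W : Submodule Fq M) :
    Nat.card ↥(W : Set M) = Fintype.card Fq ^ Module.finrank Fq ↥W := by
  have h1 : Nat.card ↥(W : Set M) = Nat.card ↥W :=
    Nat.card_congr (Equiv.subtypeEquivRight fun x => SetLike.mem_coe)
  letI : Fintype ↥W := Fintype.ofFinite _
  rw [h1, Nat.card_eq_fintype_card]
  exact Module.card_eq_pow_finrank

variable {t : ℕ} {n m : Fin t → ℕ}

lemma finrank_piSub (W : ∀ i, Submodule Fq (Fin (n i) → Fq)) :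
    Module.finrank Fq ↥(piSub W : Submodule Fq (∀ i, Matrix (Fin (n i)) (Fin (m i)) Fq)) =
      ∑ i, m i * Module.finrank Fq ↥(W i) := by
  refine Nat.pow_right_injective (Fintype.one_lt_card (α := Fq)) ?_
  letI : Fintype ↥(piSub W : Submodule Fq (∀ i, Matrix (Fin (n i)) (Fin (m i)) Fq)) :=
    Fintype.ofFinite _
  calc Fintype.card Fq ^
        Module.finrank Fq ↥(piSub W : Submodule Fq (∀ i, Matrix (Fin (n i)) (Fin (m i)) Fq))
      = Nat.card ↥(piSub W : Submodule Fq (∀ i, Matrix (Fin (n i)) (Fin (m i)) Fq)) := by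
        rw [Nat.card_eq_fintype_card]; exact Module.card_eq_pow_finrank.symm
    _ = ∏ i, Nat.card ↥(W i) ^ m i := card_piSub W
    _ = ∏ i, Fintype.card Fq ^ (Module.finrank Fq ↥(W i) * m i) := by
        refine Finset.prod_congr rfl fun i _ => ?_
        letI : Fintype ↥(W i) := Fintype.ofFinite _
        rw [Nat.card_eq_fintype_card, Module.card_eq_pow_finrank (K := Fq), ← pow_mul]
    _ = Fintype.card Fq ^ ∑ i, Module.finrank Fq ↥(W i) * m i := Finset.prod_pow_eq_pow_sum ..
    _ = Fintype.card Fq ^ ∑ i, m i * Module.finrank Fq ↥(W i) := by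
        congr 1; exact Finset.sum_congr rfl fun i _ => mul_comm _ _

end Count

section Sets
variable {Fq : Type*} [Field Fq] {t : ℕ} {n m : Fin t → ℕ}

lemma shorten_eq (C : Submodule Fq (∀ i, Matrix (Fin (n i)) (Fin (m i)) Fq))
    (W : ∀ i, Submodule Fq (Fin (n i) → Fq)) :
    shorten (C : Set (∀ i, Matrix (Fin (n i)) (Fin (m i)) Fq)) W = ↑(C ⊓ piSub W) := by
  ext X
  simp only [shorten, Set.mem_setOf_eq, SetLike.mem_coe, Submodule.mem_inf, mem_piSub]

lemma dualSet_eq (C : Submodule Fq (∀ i, Matrix (Fin (n i)) (Fin (m i)) Fq)) :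
    dualSet (C : Set (∀ i, Matrix (Fin (n i)) (Fin (m i)) Fq)) =
      ↑(Submodule.comap traceForm C.dualAnnihilator) := by
  ext Y
  simp only [dualSet, Set.mem_setOf_eq, SetLike.mem_coe, Submodule.mem_comap,
    Submodule.mem_dualAnnihilator, traceForm_apply]

end Sets


/-- duality of shortening:
`|C(U)| ⋅ q^{Σ m_i (n_i - u_i)} = |C| ⋅ |C^⊥(U^⊥)|`. -/
theorem shortening_duality (Fq : Type) [Field Fq] [Fintype Fq]
    (t : ℕ) (n m : Fin t → ℕ) (hnm : ∀ i, 1 ≤ n i ∧ n i ≤ m i)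
    (C : Submodule Fq (∀ i, Matrix (Fin (n i)) (Fin (m i)) Fq))
    (U : ∀ i, Submodule Fq (Fin (n i) → Fq)) :
    Nat.card ↥(shorten (C : Set (∀ i, Matrix (Fin (n i)) (Fin (m i)) Fq)) U) *
      (Fintype.card Fq) ^ (∑ i, m i * (n i - Module.finrank Fq (U i))) =
    Nat.card ↥(C : Set (∀ i, Matrix (Fin (n i)) (Fin (m i)) Fq)) *
      Nat.card ↥(shorten
        (dualSet (C : Set (∀ i, Matrix (Fin (n i)) (Fin (m i)) Fq)))
        (fun i => orthComp (U i))) := by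
  classical
  have hshort2 : shorten (dualSet (C : Set (∀ i, Matrix (Fin (n i)) (Fin (m i)) Fq)))
      (fun i => orthComp (U i)) =
      ↑(Submodule.comap traceForm ((C ⊔ piSub U).dualAnnihilator)) := by
    rw [dualSet_eq, shorten_eq, Submodule.dualAnnihilator_sup_eq, Submodule.comap_inf,
      comap_dualAnn_piSub]
  rw [shorten_eq, hshort2]
  -- the duality equivalence
  let Φ : (∀ i, Matrix (Fin (n i)) (Fin (m i)) Fq) ≃ₗ[Fq]
      Module.Dual Fq (∀ i, Matrix (Fin (n i)) (Fin (m i)) Fq) :=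
    LinearMap.linearEquivOfInjective traceForm traceForm_injective
      (Subspace.dual_finrank_eq (K := Fq)
        (V := ∀ i, Matrix (Fin (n i)) (Fin (m i)) Fq)).symm
  have hcomap : ∀ S : Submodule Fq (Module.Dual Fq (∀ i, Matrix (Fin (n i)) (Fin (m i)) Fq)),
      Module.finrank Fq ↥(Submodule.comap (traceForm (n := n) (m := m)) S) =
        Module.finrank Fq ↥S := by
    intro S
    have h1 : Submodule.comap (traceForm (n := n) (m := m)) S =
        Submodule.comap (Φ : (∀ i, Matrix (Fin (n i)) (Fin (m i)) Fq) →ₗ[Fq]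
          Module.Dual Fq (∀ i, Matrix (Fin (n i)) (Fin (m i)) Fq)) S := by
      ext x
      simp only [Submodule.mem_comap, LinearEquiv.coe_coe]
      rw [LinearMap.linearEquivOfInjective_apply]
    rw [h1, Submodule.comap_equiv_eq_map_symm, LinearEquiv.finrank_map_eq]
  -- cardinalities
  rw [card_submodule, card_submodule, card_submodule, hcomap]
  -- dimension identities
  have h1 : Module.finrank Fq ↥(C ⊔ piSub U) + Module.finrank Fq ↥(C ⊓ piSub U) =
      Module.finrank Fq ↥C + Module.finrank Fq ↥(piSub U : Submodule Fq
        (∀ i, Matrix (Fin (n i)) (Fin (m i)) Fq)) :=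
    Submodule.finrank_sup_add_finrank_inf_eq C (piSub U)
  have h2 : Module.finrank Fq ↥((C ⊔ piSub U).dualAnnihilator) +
      Module.finrank Fq ↥(C ⊔ piSub U) =
      Module.finrank Fq (∀ i, Matrix (Fin (n i)) (Fin (m i)) Fq) := by
    rw [← (Subspace.quotEquivAnnihilator (C ⊔ piSub U)).finrank_eq]
    exact Submodule.finrank_quotient_add_finrank _
  have hNval : Module.finrank Fq (∀ i, Matrix (Fin (n i)) (Fin (m i)) Fq) =
      ∑ i, m i * n i := by
    rw [Module.finrank_pi_fintype]
    exact Finset.sum_congr rfl fun i _ => by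
      rw [Module.finrank_matrix, Module.finrank_self, Fintype.card_fin, Fintype.card_fin,
        mul_one, mul_comm]
  have hpval : Module.finrank Fq ↥(piSub U : Submodule Fq
      (∀ i, Matrix (Fin (n i)) (Fin (m i)) Fq)) =
      ∑ i, m i * Module.finrank Fq ↥(U i) := finrank_piSub U
  have hui : ∀ i, Module.finrank Fq ↥(U i) ≤ n i := by
    intro i
    have := Submodule.finrank_le (U i)
    rwa [Module.finrank_pi, Fintype.card_fin] at this
  have hE : ∑ i, m i * (n i - Module.finrank Fq ↥(U i)) =
      (∑ i, m i * n i) - ∑ i, m i * Module.finrank Fq ↥(U i) := by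
    rw [← Finset.sum_tsub_distrib _ (fun i _ => Nat.mul_le_mul_left (m i) (hui i))]
    exact Finset.sum_congr rfl fun i _ => Nat.mul_sub (m i) (n i) _
  have hple : (∑ i, m i * Module.finrank Fq ↥(U i)) ≤ ∑ i, m i * n i :=
    Finset.sum_le_sum fun i _ => Nat.mul_le_mul_left (m i) (hui i)
  rw [hE, ← pow_add, ← pow_add]
  congr 1
  omega
end

section
/- If m_1 = ... = m_t = m and C ≤ Π is an F_q-linear MSRD code (i.e. dim C = m(N − d + 1) where d = srk(C)), then C⊥ is also MSRD; moreover, if C is non-trivial then srk(C⊥) = N − srk(C) + 2. -/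
open Matrix Finset

/-- The minimum sum-rank distance of a code (the minimum sum-rank weight of a nonzero
codeword). -/
noncomputable def minSrk {Fq : Type*} [Field Fq] {t : ℕ} {n m : Fin t → ℕ}
    (C : Set (∀ i, Matrix (Fin (n i)) (Fin (m i)) Fq)) : ℕ :=
  sInf {r | ∃ X ∈ C, X ≠ 0 ∧ srk X = r}

/-- A code in `⊕_i Fq^{n_i × m}` (all blocks with `m` columns) is MSRD if its
cardinality is `1` or attains the Singleton bound `q^{m(N - d + 1)}`. -/
def IsMSRD {Fq : Type*} [Field Fq] [Fintype Fq] {t : ℕ} {n : Fin t → ℕ} {m : ℕ}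
    (C : Set (∀ i, Matrix (Fin (n i)) (Fin ((fun _ => m) i)) Fq)) : Prop :=
  Nat.card ↥C = 1 ∨
    Nat.card ↥C = (Fintype.card Fq) ^ (m * ((∑ i, n i) - minSrk C + 1))

namespace MSRD

open Module


variable {Fq : Type*} [Field Fq]

/-- The dot-product bilinear form on `ι → Fq`. -/
def dotBF (Fq : Type*) [Field Fq] (ι : Type*) [Fintype ι] :
    LinearMap.BilinForm Fq (ι → Fq) :=
  LinearMap.mk₂ Fq (fun x y => ∑ j, x j * y j)
    (fun x x' y => by simp [add_mul, Finset.sum_add_distrib])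
    (fun c x y => by simp [Finset.mul_sum, mul_assoc])
    (fun x y y' => by simp [mul_add, Finset.sum_add_distrib])
    (fun c x y => by simp [Finset.mul_sum, mul_left_comm])

lemma dotBF_apply {ι : Type*} [Fintype ι] (x y : ι → Fq) :
    dotBF Fq ι x y = ∑ j, x j * y j := rfl

lemma dotBF_comm {ι : Type*} [Fintype ι] (x y : ι → Fq) :
    dotBF Fq ι x y = dotBF Fq ι y x := by
  simp only [dotBF_apply]
  exact Finset.sum_congr rfl fun j _ => mul_comm _ _

lemma dotBF_refl (ι : Type*) [Fintype ι] : (dotBF Fq ι).IsRefl := by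
  intro x y h
  rw [dotBF_comm]; exact h

lemma dotBF_nondeg (ι : Type*) [Fintype ι] [DecidableEq ι] :
    (dotBF Fq ι).Nondegenerate := by
  refine (LinearMap.IsRefl.nondegenerate_iff_separatingLeft (B := dotBF Fq ι) (dotBF_refl ι)).mpr ?_
  intro x hx
  funext j
  have h := hx (Pi.single j 1)
  simpa [dotBF_apply, Pi.single_apply, mul_ite, Finset.sum_ite_eq'] using h

variable {Fq : Type*} [Field Fq]

abbrev PiMat (Fq : Type*) [Field Fq] (t : ℕ) (n : Fin t → ℕ) (m : ℕ) :=
  ∀ i : Fin t, Matrix (Fin (n i)) (Fin m) Fq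

variable {t : ℕ} {n : Fin t → ℕ} {m : ℕ}

lemma trace_mul_t {a b : ℕ} (A B : Matrix (Fin a) (Fin b) Fq) :
    Matrix.trace (A * Bᵀ) = ∑ k, ∑ j, A k j * B k j := by
  simp [Matrix.trace, Matrix.diag, Matrix.mul_apply]

/-- The trace bilinear form on tuples of matrices. -/
def trBF (Fq : Type*) [Field Fq] {t : ℕ} (n : Fin t → ℕ) (m : ℕ) :
    LinearMap.BilinForm Fq (PiMat Fq t n m) :=
  LinearMap.mk₂ Fq (fun X Y => ∑ i, Matrix.trace (X i * (Y i)ᵀ))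
    (fun X X' Y => by simp [Matrix.add_mul, Finset.sum_add_distrib])
    (fun c X Y => by simp [Matrix.smul_mul, Finset.mul_sum, smul_eq_mul])
    (fun X Y Y' => by simp [Matrix.transpose_add, Matrix.mul_add, Finset.sum_add_distrib])
    (fun c X Y => by simp [Matrix.transpose_smul, Matrix.mul_smul, Finset.mul_sum, smul_eq_mul])

lemma trBF_apply (X Y : PiMat Fq t n m) :
    trBF Fq n m X Y = ∑ i, ∑ k, ∑ j, X i k j * Y i k j := by
  show (∑ i, Matrix.trace (X i * (Y i)ᵀ)) = _
  exact Finset.sum_congr rfl fun i _ => trace_mul_t _ _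

lemma trBF_comm (X Y : PiMat Fq t n m) : trBF Fq n m X Y = trBF Fq n m Y X := by
  simp only [trBF_apply]
  exact Finset.sum_congr rfl fun i _ => Finset.sum_congr rfl fun k _ =>
    Finset.sum_congr rfl fun j _ => mul_comm _ _

lemma trBF_refl : (trBF Fq n m).IsRefl := by
  intro x y h; rw [trBF_comm]; exact h

lemma trBF_nondeg : (trBF Fq n m).Nondegenerate := by
  refine (LinearMap.IsRefl.nondegenerate_iff_separatingLeft (B := trBF Fq n m) trBF_refl).mpr ?_
  intro X hX
  funext i
  ext k j
  have h := hX (Pi.single i (Matrix.of fun k' j' => if j' = j ∧ k' = k then 1 else 0))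
  rw [trBF_apply] at h
  rw [Finset.sum_eq_single i] at h
  · simp only [Pi.single_eq_same, Matrix.of_apply] at h
    simpa [ite_and, mul_ite, Finset.sum_ite_eq'] using h
  · intro b _ hb
    simp [Pi.single_eq_of_ne hb]
  · simp


/-- The subspace of tuples whose `i`-th block has all columns in `U i`. -/
def colSub (U : ∀ i, Submodule Fq (Fin (n i) → Fq)) (m : ℕ) : Submodule Fq (PiMat Fq t n m) where
  carrier := {X | ∀ i j, (fun k => X i k j) ∈ U i}
  zero_mem' := fun i j => (U i).zero_mem
  add_mem' := fun hX hY i j => (U i).add_mem (hX i j) (hY i j)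
  smul_mem' := fun c X hX i j => (U i).smul_mem c (hX i j)

lemma mem_colSub {U : ∀ i, Submodule Fq (Fin (n i) → Fq)} {X : PiMat Fq t n m} :
    X ∈ colSub U m ↔ ∀ i j, (fun k => X i k j) ∈ U i := Iff.rfl

/-- `colSub U m` is linearly equivalent to `∀ i, Fin m → U i`. -/
def colSubEquiv (U : ∀ i, Submodule Fq (Fin (n i) → Fq)) (m : ℕ) :
    colSub U m ≃ₗ[Fq] ∀ i, Fin m → (U i) where
  toFun X := fun i j => ⟨fun k => X.1 i k j, X.2 i j⟩
  map_add' X Y := rfl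
  map_smul' c X := rfl
  invFun f := ⟨fun i => Matrix.of fun k j => (f i j).1 k, fun i j => (f i j).2⟩
  left_inv X := rfl
  right_inv f := rfl

lemma finrank_colSub (U : ∀ i, Submodule Fq (Fin (n i) → Fq)) :
    finrank Fq (colSub U m) = m * ∑ i, finrank Fq (U i) := by
  rw [(colSubEquiv U m).finrank_eq, Module.finrank_pi_fintype, Finset.mul_sum]
  refine Finset.sum_congr rfl fun i _ => ?_
  rw [Module.finrank_pi_fintype]
  simp [Finset.sum_const, Finset.card_univ, mul_comm]

lemma orth_colSub (U : ∀ i, Submodule Fq (Fin (n i) → Fq)) :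
    (trBF Fq n m).orthogonal (colSub U m)
      = colSub (fun i => (dotBF Fq (Fin (n i))).orthogonal (U i)) m := by
  ext Y
  rw [LinearMap.BilinForm.mem_orthogonal_iff, mem_colSub]
  constructor
  · intro h i j
    rw [LinearMap.BilinForm.mem_orthogonal_iff]
    intro u hu
    have hX : (Pi.single i (Matrix.of fun k j' => if j' = j then u k else 0) : PiMat Fq t n m)
        ∈ colSub U m := by
      intro i' j'
      rcases eq_or_ne i' i with rfl | hne
      · simp only [Pi.single_eq_same, Matrix.of_apply]
        by_cases hj : j' = j
        · simpa [hj] using hu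
        · simp only [if_neg hj]
          exact (U i').zero_mem
      · simp only [Pi.single_eq_of_ne hne, Matrix.zero_apply]
        exact (U i').zero_mem
    have h2 := h _ hX
    rw [trBF_apply, Finset.sum_eq_single i] at h2
    · show dotBF Fq (Fin (n i)) u (fun k => Y i k j) = 0
      rw [dotBF_apply]
      simpa [ite_mul, Finset.sum_ite_eq'] using h2
    · intro b _ hb
      simp [Pi.single_eq_of_ne hb]
    · simp
  · intro h X hX
    rw [trBF_apply]
    refine Finset.sum_eq_zero fun i _ => ?_
    rw [Finset.sum_comm]
    refine Finset.sum_eq_zero fun j _ => ?_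
    exact h i j _ (hX i j)

lemma rank_le_finrank_of_cols_mem {a b : ℕ} (X : Matrix (Fin a) (Fin b) Fq)
    (U : Submodule Fq (Fin a → Fq)) (h : ∀ j, (fun k => X k j) ∈ U) :
    X.rank ≤ finrank Fq U := by
  rw [Matrix.rank]
  refine Submodule.finrank_mono ?_
  rintro y ⟨v, rfl⟩
  have hy : X *ᵥ v = ∑ j, v j • (fun k => X k j) := by
    funext k
    simp [Matrix.mulVec, dotProduct, Finset.sum_apply, mul_comm]
  rw [Matrix.mulVecLin_apply, hy]
  exact Submodule.sum_mem _ fun j _ => Submodule.smul_mem _ _ (h j)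

lemma rank_eq_zero' {a b : ℕ} (X : Matrix (Fin a) (Fin b) Fq) (h : X.rank = 0) : X = 0 := by
  have hr : LinearMap.range X.mulVecLin = ⊥ := by
    rw [← Submodule.finrank_eq_zero]
    exact h
  have h0 : X.mulVecLin = 0 := LinearMap.range_eq_bot.mp hr
  ext k j
  calc X k j = (X *ᵥ Pi.single j 1) k := by simp
    _ = 0 := by rw [← Matrix.mulVecLin_apply, h0]; rfl

lemma cols_mem_colSpan {a b : ℕ} (X : Matrix (Fin a) (Fin b) Fq) (j : Fin b) :
    (fun k => X k j) ∈ LinearMap.range X.mulVecLin :=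
  ⟨Pi.single j 1, by funext k; simp⟩


lemma exists_pad (W : ∀ i, Submodule Fq (Fin (n i) → Fq)) (u : ℕ)
    (h1 : ∑ i, finrank Fq (W i) ≤ u) (h2 : u ≤ ∑ i, n i) :
    ∃ U : ∀ i, Submodule Fq (Fin (n i) → Fq),
      (∀ i, W i ≤ U i) ∧ ∑ i, finrank Fq (U i) = u := by
  obtain ⟨d, hd⟩ : ∃ d, ∑ i, finrank Fq (W i) + d = u := ⟨u - ∑ i, finrank Fq (W i), by omega⟩
  clear h1
  induction d generalizing W with
  | zero => exact ⟨W, fun i => le_rfl, by omega⟩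
  | succ d ih =>
    have hlt : ∑ i, finrank Fq (W i) < ∑ i, n i := by omega
    have hex : ∃ i₀, finrank Fq (W i₀) < n i₀ := by
      by_contra hc
      push_neg at hc
      have hge : ∑ i, n i ≤ ∑ i, finrank Fq (W i) :=
        Finset.sum_le_sum fun i _ => hc i
      omega
    obtain ⟨i₀, hi₀⟩ := hex
    have hne : W i₀ ≠ ⊤ := by
      intro htop
      rw [htop, finrank_top, Module.finrank_fintype_fun_eq_card, Fintype.card_fin] at hi₀
      omega
    obtain ⟨x, hx⟩ : ∃ x, x ∉ W i₀ := by
      by_contra hc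
      push_neg at hc
      exact hne (Submodule.eq_top_iff'.mpr hc)
    have hx0 : x ≠ 0 := fun h => hx (h ▸ (W i₀).zero_mem)
    have hfr : finrank Fq ↥(W i₀ ⊔ Fq ∙ x) = finrank Fq (W i₀) + 1 := by
      have hle := Submodule.finrank_sup_add_finrank_inf_eq (W i₀) (Fq ∙ x)
      rw [finrank_span_singleton hx0] at hle
      have hlt' : finrank Fq (W i₀) < finrank Fq ↥(W i₀ ⊔ Fq ∙ x) := by
        refine Submodule.finrank_lt_finrank_of_lt (lt_of_le_of_ne le_sup_left fun he => hx ?_)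
        rw [he]
        exact Submodule.mem_sup_right (Submodule.mem_span_singleton_self x)
      omega
    have hW' : ∀ i, W i ≤ Function.update W i₀ (W i₀ ⊔ Fq ∙ x) i := by
      intro i
      rcases eq_or_ne i i₀ with rfl | hi
      · rw [Function.update_self]
        exact le_sup_left
      · rw [Function.update_of_ne hi]
    have hsum : ∑ i, finrank Fq ↥(Function.update W i₀ (W i₀ ⊔ Fq ∙ x) i)
        = ∑ i, finrank Fq (W i) + 1 := by
      have e1 : finrank Fq ↥(Function.update W i₀ (W i₀ ⊔ Fq ∙ x) i₀)
          + ∑ i ∈ Finset.univ.erase i₀, finrank Fq ↥(Function.update W i₀ (W i₀ ⊔ Fq ∙ x) i)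
          = ∑ i, finrank Fq ↥(Function.update W i₀ (W i₀ ⊔ Fq ∙ x) i) :=
        by exact Finset.add_sum_erase Finset.univ
            (fun i => finrank Fq ↥(Function.update W i₀ (W i₀ ⊔ Fq ∙ x) i)) (Finset.mem_univ i₀)
      have e2 : ∑ i ∈ Finset.univ.erase i₀,
            finrank Fq ↥(Function.update W i₀ (W i₀ ⊔ Fq ∙ x) i)
          = ∑ i ∈ Finset.univ.erase i₀, finrank Fq ↥(W i) :=
        Finset.sum_congr rfl fun i hi => by
          rw [Function.update_of_ne (Finset.ne_of_mem_erase hi)]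
      have e3 : finrank Fq ↥(W i₀) + ∑ i ∈ Finset.univ.erase i₀, finrank Fq ↥(W i)
          = ∑ i, finrank Fq ↥(W i) :=
        by exact Finset.add_sum_erase Finset.univ (fun i => finrank Fq ↥(W i))
            (Finset.mem_univ i₀)
      rw [Function.update_self] at e1
      omega
    obtain ⟨U, hU1, hU2⟩ := ih (Function.update W i₀ (W i₀ ⊔ Fq ∙ x)) (by omega)
    exact ⟨U, fun i => le_trans (hW' i) (hU1 i), hU2⟩

lemma arith1 (a s b c v : ℕ) (h1 : s + 0 = a + b) (h2 : s ≤ v) (key : c + b = v) : a ≤ c := by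
  omega

lemma arith3 (a v : ℕ) (h2 : a ≤ v) (h3 : 0 = v - a) : a = v := by omega

lemma arith4 (x v a b : ℕ) (hk : x + v = a + b + 0) (hmn : a + b = v) : x = 0 := by omega

lemma mul_sub_helper (m N d : ℕ) (h1 : 1 ≤ d) (h2 : d ≤ N) :
    m * N - m * (N - d + 1) = m * (d - 1) := by
  have h3 : N = (N - d + 1) + (d - 1) := by omega
  calc m * N - m * (N - d + 1)
      = m * ((N - d + 1) + (d - 1)) - m * (N - d + 1) := by rw [← h3]
    _ = m * (N - d + 1) + m * (d - 1) - m * (N - d + 1) := by rw [Nat.mul_add]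
    _ = m * (d - 1) := by rw [Nat.add_sub_cancel_left]

variable [Fintype Fq]

lemma card_coe (C : Submodule Fq (PiMat Fq t n m)) :
    Nat.card ↥(C : Set (PiMat Fq t n m)) = (Fintype.card Fq) ^ (finrank Fq ↥C) := by
  letI : Fintype ↥C := Fintype.ofFinite _
  have h : Nat.card ↥(C : Set (PiMat Fq t n m)) = Fintype.card ↥C := Nat.card_eq_fintype_card
  rw [h]
  exact card_eq_pow_finrank (K := Fq)

lemma finrank_PiMat : finrank Fq (PiMat Fq t n m) = m * ∑ i, n i := by
  rw [Module.finrank_pi_fintype]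
  simp only [Module.finrank_matrix, Fintype.card_fin, Module.finrank_self, mul_one]
  rw [← Finset.sum_mul, mul_comm]

lemma srk_le_sum_of_colSub {U : ∀ i, Submodule Fq (Fin (n i) → Fq)} {X : PiMat Fq t n m}
    (hX : X ∈ colSub U m) : srk X ≤ ∑ i, finrank Fq (U i) :=
  Finset.sum_le_sum fun i _ => rank_le_finrank_of_cols_mem _ _ (hX i)

lemma srk_le_N (X : PiMat Fq t n m) : srk X ≤ ∑ i, n i :=
  Finset.sum_le_sum fun i _ => (X i).rank_le_height

lemma srk_eq_zero' {X : PiMat Fq t n m} (h : srk X = 0) : X = 0 := by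
  funext i
  have h' : ∑ i, (X i).rank = 0 := h
  exact rank_eq_zero' _ ((Finset.sum_eq_zero_iff.mp h') i (Finset.mem_univ i))

lemma one_le_srk {X : PiMat Fq t n m} (h : X ≠ 0) : 1 ≤ srk X := by
  rcases Nat.eq_zero_or_pos (srk X) with h0 | h1
  · exact absurd (srk_eq_zero' h0) h
  · exact h1

lemma exists_minSrk (C : Submodule Fq (PiMat Fq t n m)) (hC : C ≠ ⊥) :
    ∃ Y ∈ C, Y ≠ 0 ∧ srk Y = minSrk (C : Set (PiMat Fq t n m)) := by
  obtain ⟨Y, hY, hY0⟩ := (Submodule.ne_bot_iff C).mp hC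
  have hne : {r | ∃ X ∈ (C : Set (PiMat Fq t n m)), X ≠ 0 ∧ srk X = r}.Nonempty :=
    ⟨srk Y, Y, hY, hY0, rfl⟩
  obtain ⟨X, h1, h2, h3⟩ := Nat.sInf_mem hne
  exact ⟨X, h1, h2, h3⟩

lemma minSrk_le {C : Submodule Fq (PiMat Fq t n m)} {X : PiMat Fq t n m}
    (hX : X ∈ C) (h0 : X ≠ 0) : minSrk (C : Set (PiMat Fq t n m)) ≤ srk X :=
  Nat.sInf_le ⟨X, hX, h0, rfl⟩

lemma inf_colSub_eq_bot (C : Submodule Fq (PiMat Fq t n m))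
    (U : ∀ i, Submodule Fq (Fin (n i) → Fq))
    (h : ∑ i, finrank Fq (U i) < minSrk (C : Set (PiMat Fq t n m))) :
    C ⊓ colSub U m = ⊥ := by
  rw [Submodule.eq_bot_iff]
  rintro X ⟨hX1, hX2⟩
  by_contra h0
  have h1 := minSrk_le hX1 h0
  have h2 := srk_le_sum_of_colSub hX2
  omega

lemma singleton_bound (C : Submodule Fq (PiMat Fq t n m)) (hC : C ≠ ⊥) :
    finrank Fq ↥C ≤ m * ((∑ i, n i) - minSrk (C : Set (PiMat Fq t n m)) + 1) := by
  set N := ∑ i, n i with hN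
  set d := minSrk (C : Set (PiMat Fq t n m)) with hdd
  obtain ⟨Y, hY, hY0, hYs⟩ := exists_minSrk C hC
  rw [← hdd] at hYs
  have hd1 : 1 ≤ d := hYs ▸ one_le_srk hY0
  have hdN : d ≤ N := hYs ▸ srk_le_N Y
  obtain ⟨U, hU, hUsum⟩ := exists_pad (fun i => (⊥ : Submodule Fq (Fin (n i) → Fq)))
    (d - 1) (by simp) (by omega)
  have hbot : C ⊓ colSub U m = ⊥ := inf_colSub_eq_bot C U (by omega)
  have h1 := Submodule.finrank_sup_add_finrank_inf_eq C (colSub U m)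
  rw [hbot, finrank_bot, finrank_colSub, hUsum] at h1
  have h2 : finrank Fq ↥(C ⊔ colSub U m) ≤ finrank Fq (PiMat Fq t n m) :=
    Submodule.finrank_le _
  rw [finrank_PiMat] at h2
  have key : m * (N - d + 1) + m * (d - 1) = m * N := by
    rw [← Nat.mul_add]
    congr 1
    omega
  exact arith1 (finrank Fq ↥C) (finrank Fq ↥(C ⊔ colSub U m)) (m * (d - 1))
    (m * (N - d + 1)) (m * N) h1 h2 key


lemma finrank_orth (C : Submodule Fq (PiMat Fq t n m)) :
    finrank Fq ↥((trBF Fq n m).orthogonal C)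
      = finrank Fq (PiMat Fq t n m) - finrank Fq ↥C :=
  LinearMap.BilinForm.finrank_orthogonal trBF_nondeg C

lemma orth_orth (C : Submodule Fq (PiMat Fq t n m)) :
    (trBF Fq n m).orthogonal ((trBF Fq n m).orthogonal C) = C :=
  LinearMap.BilinForm.orthogonal_orthogonal trBF_nondeg trBF_refl C

lemma orth_sup (P Q : Submodule Fq (PiMat Fq t n m)) :
    (trBF Fq n m).orthogonal (P ⊔ Q)
      = (trBF Fq n m).orthogonal P ⊓ (trBF Fq n m).orthogonal Q := by
  refine le_antisymm (le_inf (LinearMap.BilinForm.orthogonal_le le_sup_left)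
    (LinearMap.BilinForm.orthogonal_le le_sup_right)) ?_
  rintro x ⟨hxP, hxQ⟩
  intro y hy
  obtain ⟨p, hp, q, hq, rfl⟩ := Submodule.mem_sup.mp hy
  show trBF Fq n m (p + q) x = 0
  rw [map_add, LinearMap.add_apply]
  have h1 : trBF Fq n m p x = 0 := hxP p hp
  have h2 : trBF Fq n m q x = 0 := hxQ q hq
  rw [h1, h2, add_zero]

lemma dualSet_eq_orth (C : Submodule Fq (PiMat Fq t n m)) :
    dualSet (C : Set (PiMat Fq t n m))
      = (((trBF Fq n m).orthogonal C : Submodule Fq (PiMat Fq t n m))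
          : Set (PiMat Fq t n m)) := rfl

lemma finrank_perp {a : ℕ} (U : Submodule Fq (Fin a → Fq)) :
    finrank Fq ↥((dotBF Fq (Fin a)).orthogonal U) = a - finrank Fq ↥U := by
  rw [LinearMap.BilinForm.finrank_orthogonal (dotBF_nondeg _),
    Module.finrank_fintype_fun_eq_card, Fintype.card_fin]

lemma key_dim (C : Submodule Fq (PiMat Fq t n m)) (U : ∀ i, Submodule Fq (Fin (n i) → Fq)) :
    finrank Fq ↥((trBF Fq n m).orthogonal C ⊓ colSub U m) + finrank Fq (PiMat Fq t n m)
      = finrank Fq ↥((trBF Fq n m).orthogonal C) + finrank Fq ↥(colSub U m)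
        + finrank Fq ↥(C ⊓ colSub (fun i => (dotBF Fq (Fin (n i))).orthogonal (U i)) m) := by
  have h1 := Submodule.finrank_sup_add_finrank_inf_eq ((trBF Fq n m).orthogonal C) (colSub U m)
  have h2 : (trBF Fq n m).orthogonal ((trBF Fq n m).orthogonal C ⊔ colSub U m)
      = C ⊓ colSub (fun i => (dotBF Fq (Fin (n i))).orthogonal (U i)) m := by
    rw [orth_sup, orth_orth, orth_colSub]
  have h3 := finrank_orth ((trBF Fq n m).orthogonal C ⊔ colSub U m)
  rw [h2] at h3
  have h4 : finrank Fq ↥((trBF Fq n m).orthogonal C ⊔ colSub U m)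
      ≤ finrank Fq (PiMat Fq t n m) := Submodule.finrank_le _
  omega


lemma isMSRD_top (hnm : ∀ i, 1 ≤ n i ∧ n i ≤ m) :
    IsMSRD (((⊤ : Submodule Fq (PiMat Fq t n m))) : Set (PiMat Fq t n m)) := by
  rcases Nat.eq_zero_or_pos t with ht | ht
  · refine Or.inl ?_
    subst ht
    letI : Unique (PiMat Fq 0 n m) :=
      ⟨⟨0⟩, fun a => funext fun i => i.elim0⟩
    rw [Submodule.top_coe]
    calc Nat.card ↥(Set.univ : Set (PiMat Fq 0 n m))
        = Nat.card (PiMat Fq 0 n m) := Nat.card_congr (Equiv.Set.univ _)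
      _ = 1 := Nat.card_unique
  · refine Or.inr ?_
    obtain ⟨i₀⟩ : Nonempty (Fin t) := ⟨⟨0, ht⟩⟩
    have hn0 : 1 ≤ n i₀ := (hnm i₀).1
    have hm : 1 ≤ m := le_trans hn0 (hnm i₀).2
    set k0 : Fin (n i₀) := ⟨0, hn0⟩
    set j0 : Fin m := ⟨0, hm⟩
    set M : Matrix (Fin (n i₀)) (Fin m) Fq :=
      Matrix.of fun k j => if k = k0 ∧ j = j0 then 1 else 0 with hM
    set E : PiMat Fq t n m := Pi.single i₀ M with hE
    have hM0 : M ≠ 0 := by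
      intro h
      have h2 := congrFun (congrFun h k0) j0
      simp [hM] at h2
    have hsingle0 : (Pi.single k0 (1:Fq) : Fin (n i₀) → Fq) ≠ 0 := by
      intro h
      have h2 := congrFun h k0
      simp at h2
    have hMrank : M.rank = 1 := by
      have hle : M.rank ≤ 1 := by
        have h1 := rank_le_finrank_of_cols_mem M (Fq ∙ (Pi.single k0 (1:Fq))) ?_
        · rwa [finrank_span_singleton hsingle0] at h1
        · intro j
          by_cases hj : j = j0
          · have hcol : (fun k => M k j) = Pi.single k0 (1:Fq) := by
              funext k
              simp [hM, Pi.single_apply, hj]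
            rw [hcol]
            exact Submodule.mem_span_singleton_self _
          · have hcol : (fun k => M k j) = 0 := by
              funext k
              simp [hM, hj]
            rw [hcol]
            exact Submodule.zero_mem _
      have hne : M.rank ≠ 0 := fun h => hM0 (rank_eq_zero' M h)
      omega
    have hErank : srk E = 1 := by
      show (∑ i, (E i).rank) = 1
      rw [Finset.sum_eq_single i₀]
      · rw [hE, Pi.single_eq_same, hMrank]
      · intro b _ hb
        rw [hE, Pi.single_eq_of_ne hb, Matrix.rank_zero]
      · simp
    have hE0 : E ≠ 0 := by
      intro h
      apply hM0
      have h2 := congrFun h i₀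
      rwa [hE, Pi.single_eq_same] at h2
    have hmem : (1:ℕ) ∈ {r | ∃ X ∈ ((⊤ : Submodule Fq (PiMat Fq t n m))
        : Set (PiMat Fq t n m)), X ≠ 0 ∧ srk X = r} := ⟨E, trivial, hE0, hErank⟩
    have hminle : minSrk (((⊤ : Submodule Fq (PiMat Fq t n m))) : Set (PiMat Fq t n m)) ≤ 1 :=
      Nat.sInf_le hmem
    have htopbot : (⊤ : Submodule Fq (PiMat Fq t n m)) ≠ ⊥ := by
      intro h
      apply hE0
      have : E ∈ (⊥ : Submodule Fq (PiMat Fq t n m)) := h ▸ Submodule.mem_top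
      simpa using this
    have hminge : 1 ≤ minSrk (((⊤ : Submodule Fq (PiMat Fq t n m))) : Set (PiMat Fq t n m)) := by
      obtain ⟨Y, _, hY0, hYs⟩ := exists_minSrk ⊤ htopbot
      rw [← hYs]
      exact one_le_srk hY0
    have hmin : minSrk (((⊤ : Submodule Fq (PiMat Fq t n m))) : Set (PiMat Fq t n m)) = 1 :=
      le_antisymm hminle hminge
    rw [hmin, card_coe (⊤ : Submodule Fq (PiMat Fq t n m)), finrank_top, finrank_PiMat]
    have hN1 : 1 ≤ ∑ i, n i :=
      le_trans hn0 (Finset.single_le_sum (fun i _ => Nat.zero_le _) (Finset.mem_univ i₀))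
    have hsub : (∑ i, n i) - 1 + 1 = ∑ i, n i := by omega
    rw [hsub]


lemma main_clean (hnm : ∀ i, 1 ≤ n i ∧ n i ≤ m)
    (C : Submodule Fq (PiMat Fq t n m))
    (hC : IsMSRD (C : Set (PiMat Fq t n m))) :
    IsMSRD (dualSet (C : Set (PiMat Fq t n m))) ∧
    (C ≠ ⊥ → C ≠ ⊤ →
      minSrk (dualSet (C : Set (PiMat Fq t n m)))
        = (∑ i, n i) - minSrk (C : Set (PiMat Fq t n m)) + 2) := by
  classical
  have hq : 2 ≤ Fintype.card Fq := Fintype.one_lt_card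
  rw [dualSet_eq_orth C]
  by_cases hbot : C = ⊥
  · constructor
    · rw [hbot, LinearMap.BilinForm.orthogonal_bot]
      exact isMSRD_top hnm
    · intro h
      exact absurd hbot h
  by_cases htop : C = ⊤
  · constructor
    · rw [htop, LinearMap.BilinForm.orthogonal_top_eq_bot trBF_nondeg]
      refine Or.inl ?_
      rw [Submodule.bot_coe]
      exact Nat.card_unique
    · intro _ h
      exact absurd htop h
  -- main case
  set N := ∑ i, n i with hN
  have hfinV : finrank Fq (PiMat Fq t n m) = m * N := finrank_PiMat
  obtain ⟨X₀, hX₀C, hX₀0⟩ := (Submodule.ne_bot_iff C).mp hbot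
  obtain ⟨i₀, hi₀⟩ : ∃ i, X₀ i ≠ 0 := by
    by_contra hc
    push_neg at hc
    exact hX₀0 (funext hc)
  have hm : 1 ≤ m := le_trans (hnm i₀).1 (hnm i₀).2
  set d := minSrk (C : Set (PiMat Fq t n m)) with hd
  obtain ⟨Ym, hYmC, hYm0, hYms⟩ := exists_minSrk C hbot
  rw [← hd] at hYms
  have hd1 : 1 ≤ d := hYms ▸ one_le_srk hYm0
  have hdN : d ≤ N := hYms ▸ srk_le_N Ym
  have ha : finrank Fq ↥C = m * (N - d + 1) := by
    rcases hC with h | h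
    · exfalso
      rw [card_coe C] at h
      rcases Nat.eq_zero_or_pos (finrank Fq ↥C) with h0 | h0
      · exact hbot (Submodule.finrank_eq_zero.mp h0)
      · have h1 : 1 < Fintype.card Fq ^ finrank Fq ↥C :=
          Nat.one_lt_pow (by omega) (by omega)
        omega
    · rw [card_coe C] at h
      exact Nat.pow_right_injective hq h
  set D := (trBF Fq n m).orthogonal C with hD
  have hfinD : finrank Fq ↥D = m * (d - 1) := by
    have h0 := finrank_orth (Fq := Fq) (n := n) (m := m) C
    rw [hfinV, ha] at h0
    rw [← hD] at h0
    rw [h0]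
    exact mul_sub_helper m N d hd1 hdN
  have hDbot : D ≠ ⊥ := by
    intro h
    apply htop
    have h0 : finrank Fq ↥D = 0 := by rw [h, finrank_bot]
    have h2 : finrank Fq ↥C ≤ m * N := by
      have h2' := Submodule.finrank_le C
      rwa [hfinV] at h2'
    have h3 := finrank_orth (Fq := Fq) (n := n) (m := m) C
    rw [hfinV, ← hD, h0] at h3
    have h4 : finrank Fq ↥C = m * N := arith3 _ _ h2 h3
    exact Submodule.eq_top_of_finrank_eq (by rw [h4, ← hfinV])
  have hd2 : 2 ≤ d := by
    by_contra hlt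
    have hd1' : d = 1 := by omega
    apply htop
    apply Submodule.eq_top_of_finrank_eq
    rw [ha, hd1', hfinV]
    have : N - 1 + 1 = N := by omega
    rw [this]
  set d' := minSrk (D : Set (PiMat Fq t n m)) with hd'
  obtain ⟨Z, hZD, hZ0, hZs⟩ := exists_minSrk D hDbot
  rw [← hd'] at hZs
  have hd'1 : 1 ≤ d' := hZs ▸ one_le_srk hZ0
  have hd'N : d' ≤ N := hZs ▸ srk_le_N Z
  have hub : d' ≤ N - d + 2 := by
    have hs := singleton_bound D hDbot
    rw [hfinD, ← hN, ← hd'] at hs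
    have hss : d - 1 ≤ N - d' + 1 := Nat.le_of_mul_le_mul_left hs (by omega)
    omega
  have hlb : ∀ Y, Y ∈ D → Y ≠ 0 → N - d + 2 ≤ srk Y := by
    intro Y hYD hY0
    by_contra hcon
    push_neg at hcon
    have hw : srk Y ≤ N - d + 1 := by omega
    obtain ⟨U, hU, hUsum⟩ := exists_pad (fun i => LinearMap.range (Y i).mulVecLin)
      (N - d + 1) (by exact hw) (by omega)
    have hYU : Y ∈ colSub U m := fun i j => hU i (cols_mem_colSpan (Y i) j)
    have hperp : ∑ i, finrank Fq ↥((dotBF Fq (Fin (n i))).orthogonal (U i)) = d - 1 := by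
      have he : ∀ i ∈ Finset.univ,
          finrank Fq ↥((dotBF Fq (Fin (n i))).orthogonal (U i))
            = n i - finrank Fq ↥(U i) := fun i _ => finrank_perp _
      rw [Finset.sum_congr rfl he,
        Finset.sum_tsub_distrib _ (fun i _ => ?_), hUsum, ← hN]
      · omega
      · have h5 := Submodule.finrank_le (U i)
        rwa [Module.finrank_fintype_fun_eq_card, Fintype.card_fin] at h5
    have hbot2 : C ⊓ colSub (fun i => (dotBF Fq (Fin (n i))).orthogonal (U i)) m = ⊥ := by
      apply inf_colSub_eq_bot
      rw [hperp, ← hd]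
      omega
    have hk := key_dim C U
    rw [hbot2, finrank_bot, hfinV, ← hD, hfinD, finrank_colSub, hUsum] at hk
    have hmn : m * (d - 1) + m * (N - d + 1) = m * N := by
      rw [← Nat.mul_add]
      congr 1
      omega
    have hzero : finrank Fq ↥(D ⊓ colSub U m) = 0 :=
      arith4 _ _ _ _ hk hmn
    have hDU : D ⊓ colSub U m = ⊥ := Submodule.finrank_eq_zero.mp hzero
    have hY00 : Y = 0 := by
      have hmem : Y ∈ (⊥ : Submodule Fq (PiMat Fq t n m)) :=
        hDU ▸ (Submodule.mem_inf.mpr ⟨hYD, hYU⟩)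
      simpa using hmem
    exact hY0 hY00
  have hd'eq : d' = N - d + 2 := le_antisymm hub (hZs ▸ hlb Z hZD hZ0)
  constructor
  · refine Or.inr ?_
    rw [card_coe D, hfinD, ← hN, ← hd', hd'eq]
    have hsub : N - (N - d + 2) + 1 = d - 1 := by omega
    rw [hsub]
  · intro _ _
    exact hd'eq


end MSRD

/-- when all blocks have `m` columns, the dual of a linear MSRD code is
MSRD; moreover, if the code is non-trivial, `srk(C^⊥) = N - srk(C) + 2`. -/
theorem dual_of_MSRD_is_MSRD (Fq : Type) [Field Fq] [Fintype Fq]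
    (t : ℕ) (n : Fin t → ℕ) (m : ℕ) (hnm : ∀ i, 1 ≤ n i ∧ n i ≤ m)
    (C : Submodule Fq (∀ i, Matrix (Fin (n i)) (Fin ((fun _ => m) i)) Fq))
    (hC : IsMSRD (C : Set (∀ i, Matrix (Fin (n i)) (Fin ((fun _ => m) i)) Fq))) :
    IsMSRD (dualSet (C : Set (∀ i, Matrix (Fin (n i)) (Fin ((fun _ => m) i)) Fq))) ∧
    (C ≠ ⊥ → C ≠ ⊤ →
      minSrk (dualSet (C : Set (∀ i, Matrix (Fin (n i)) (Fin ((fun _ => m) i)) Fq)))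
        = (∑ i, n i) -
            minSrk (C : Set (∀ i, Matrix (Fin (n i)) (Fin ((fun _ => m) i)) Fq)) + 2) := by
  exact MSRD.main_clean hnm C hC
end

section
/- Over any finite field F_q, consider Π = ⊕_{i=1}^t F_q^{n_i × m_i} with m_1 ≥ ... ≥ m_t and n_i ≤ m_i. Let C_i ≤ F_q^{n_i × m_i} be MRD codes of rank distance n_i (so dim C_i = m_i), with basis A_{i,1},...,A_{i,m_i}. Then the code C = span{(A_{1,j},...,A_{t,j}) : 1 ≤ j ≤ m_t} has dimension m_t, every nonzero codeword has sum-rank weight N = Σ n_i, and C is MSRD of sum-rank distance N. -/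
open Matrix Finset

/-- Construction of MSRD codes of sum-rank distance `N`. Given for each
block an MRD code `C_i ≤ Fq^{n_i × m_i}` of rank distance `n_i` (so every nonzero
codeword has full rank and `dim C_i = m_i`) with basis `A_{i,1}, ..., A_{i,m_i}`, the
span of the `m_t` tuples `(A_{1,j}, ..., A_{t,j})` has dimension `m_t`, every nonzero
codeword has sum-rank weight `N = Σ n_i`, and it is MSRD with minimum distance `N`. -/
theorem full_distance_MSRD_construction (Fq : Type) [Field Fq] [Fintype Fq]
    (t : ℕ) (n m : Fin (t + 1) → ℕ)
    (hnm : ∀ i, 1 ≤ n i ∧ n i ≤ m i)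
    (hmono : ∀ i j : Fin (t + 1), i ≤ j → m j ≤ m i)
    (Ci : ∀ i, Submodule Fq (Matrix (Fin (n i)) (Fin (m i)) Fq))
    (hMRD : ∀ i, ∀ X ∈ Ci i, X ≠ 0 → (X : Matrix (Fin (n i)) (Fin (m i)) Fq).rank = n i)
    (A : ∀ i, Fin (m i) → Matrix (Fin (n i)) (Fin (m i)) Fq)
    (hindep : ∀ i, LinearIndependent Fq (A i))
    (hspan : ∀ i, Submodule.span Fq (Set.range (A i)) = Ci i) :
    Module.finrank Fq (Submodule.span Fq (Set.range
        (fun (j : Fin (m (Fin.last t))) (i : Fin (t + 1)) =>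
          A i (Fin.castLE (hmono i (Fin.last t) (Fin.le_last i)) j))))
      = m (Fin.last t) ∧
    (∀ X ∈ Submodule.span Fq (Set.range
        (fun (j : Fin (m (Fin.last t))) (i : Fin (t + 1)) =>
          A i (Fin.castLE (hmono i (Fin.last t) (Fin.le_last i)) j))),
      X ≠ 0 → srk X = ∑ i, n i) ∧
    IsLeast {r | ∃ X ∈ Submodule.span Fq (Set.range
        (fun (j : Fin (m (Fin.last t))) (i : Fin (t + 1)) =>
          A i (Fin.castLE (hmono i (Fin.last t) (Fin.le_last i)) j))),
      X ≠ 0 ∧ srk X = r} (∑ i, n i) := by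
  set v : Fin (m (Fin.last t)) → ∀ i, Matrix (Fin (n i)) (Fin (m i)) Fq :=
    fun j i => A i (Fin.castLE (hmono i (Fin.last t) (Fin.le_last i)) j) with hv
  have hcomp : ∀ i : Fin (t + 1), LinearIndependent Fq (fun j : Fin (m (Fin.last t)) =>
      A i (Fin.castLE (hmono i (Fin.last t) (Fin.le_last i)) j)) := fun i =>
    (hindep i).comp _ (Fin.castLE_injective _)
  have hvindep : LinearIndependent Fq v := by
    apply LinearIndependent.of_comp (LinearMap.proj (0 : Fin (t + 1)))
    exact hcomp 0
  have key : ∀ X ∈ Submodule.span Fq (Set.range v), X ≠ 0 → srk X = ∑ i, n i := by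
    intro X hX hX0
    obtain ⟨c, hc⟩ := (Submodule.mem_span_range_iff_exists_fun Fq).mp hX
    have hcne : c ≠ 0 := by
      rintro rfl
      apply hX0
      rw [← hc]
      simp
    have hXi : ∀ i, X i = ∑ j, c j • A i (Fin.castLE (hmono i (Fin.last t) (Fin.le_last i)) j) := by
      intro i
      rw [← hc]
      simp [v, Finset.sum_apply]
    have hrank : ∀ i, (X i).rank = n i := by
      intro i
      apply hMRD i
      · rw [hXi i]
        apply Submodule.sum_mem
        intro j _
        apply Submodule.smul_mem
        rw [← hspan i]
        exact Submodule.subset_span (Set.mem_range_self _)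
      · intro h
        apply hcne
        have hz : ∑ j, c j • A i (Fin.castLE (hmono i (Fin.last t) (Fin.le_last i)) j) = 0 := by
          rw [← hXi i]; exact h
        funext j
        exact Fintype.linearIndependent_iff.mp (hcomp i) c hz j
    simp only [srk, hrank]
  refine ⟨?_, key, ?_, ?_⟩
  · rw [finrank_span_eq_card hvindep]
    simp
  · -- membership: exhibit a nonzero codeword
    have hm : 0 < m (Fin.last t) := lt_of_lt_of_le (hnm (Fin.last t)).1 (hnm (Fin.last t)).2
    refine ⟨v ⟨0, hm⟩, Submodule.subset_span (Set.mem_range_self _), ?_, ?_⟩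
    · intro h
      have h0 : v ⟨0, hm⟩ (Fin.last t) = 0 := by rw [h]; rfl
      exact (hindep (Fin.last t)).ne_zero _ h0
    · exact key _ (Submodule.subset_span (Set.mem_range_self _)) (by
        intro h
        have h0 : v ⟨0, hm⟩ (Fin.last t) = 0 := by rw [h]; rfl
        exact (hindep (Fin.last t)).ne_zero _ h0)
  · rintro r ⟨X, hX, hX0, rfl⟩
    exact le_of_eq (key X hX hX0).symm
end

section
/- Lifting construction: let δ_i ∈ [n_i], let C_i be [n_i × m_i; δ_i]_q MRD codes, let 1 ≤ h ≤ min_i m_i(n_i − δ_i + 1), let H ≤ F_{q^h}^t be a nonzero F_q-linear code of minimum Hamming distance Δ, and let φ_i : F_{q^h} → C_i be F_q-linear injections. Then C := {(φ_1(α_1),...,φ_t(α_t)) : (α_1,...,α_t) ∈ H} ≤ Π satisfies dim_{F_q}(C) = dim_{F_q}(H) and srk(C) ≥ min{Σ_{i∈I} δ_i : I ⊆ [t], |I| = Δ}. -/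
open Matrix Finset

/-- the lifting construction. Given `[n_i × m_i; δ_i]` MRD codes `C_i`,
a field extension `K = F_{q^h}` with `h ≤ min_i m_i (n_i - δ_i + 1)`, a nonzero
`Fq`-linear code `H ≤ K^t` of minimum Hamming distance `Δ`, and `Fq`-linear injections
`φ_i : K → C_i`, the lifted code `C = {(φ_1(α_1), ..., φ_t(α_t)) : α ∈ H}` satisfies
`dim_{Fq} C = dim_{Fq} H` and `srk(C) ≥ min{Σ_{i ∈ I} δ_i : I ⊆ [t], |I| = Δ}`. -/
theorem lifting_construction (Fq : Type) [Field Fq] [Fintype Fq]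
    (t : ℕ) (n m : Fin t → ℕ) (hnm : ∀ i, 1 ≤ n i ∧ n i ≤ m i)
    (δ : Fin t → ℕ) (hδ : ∀ i, 1 ≤ δ i ∧ δ i ≤ n i)
    (Ci : ∀ i, Submodule Fq (Matrix (Fin (n i)) (Fin (m i)) Fq))
    (hMRDdim : ∀ i, Module.finrank Fq (Ci i) = m i * (n i - δ i + 1))
    (hMRDdist : ∀ i, ∀ X ∈ Ci i, X ≠ 0 →
      δ i ≤ (X : Matrix (Fin (n i)) (Fin (m i)) Fq).rank)
    (K : Type) [Field K] [Algebra Fq K] [DecidableEq K]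
    (h : ℕ) (hh1 : 1 ≤ h) (hK : Module.finrank Fq K = h)
    (hhmin : ∀ i, h ≤ m i * (n i - δ i + 1))
    (H : Submodule Fq (Fin t → K)) (hH : H ≠ ⊥) (Δ : ℕ)
    (hΔ : IsLeast {e | ∃ α ∈ H, ∃ β ∈ H, α ≠ β ∧ hammingDist α β = e} Δ)
    (φ : ∀ i, K →ₗ[Fq] Matrix (Fin (n i)) (Fin (m i)) Fq)
    (hφinj : ∀ i, Function.Injective (φ i))
    (hφrange : ∀ i, ∀ a : K, φ i a ∈ Ci i) :
    Module.finrank Fq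
        (H.map (LinearMap.pi fun i => (φ i).comp (LinearMap.proj i)))
      = Module.finrank Fq H ∧
    ∀ X ∈ H.map (LinearMap.pi fun i => (φ i).comp (LinearMap.proj i)), X ≠ 0 →
      sInf {s | ∃ I : Finset (Fin t), I.card = Δ ∧ s = ∑ i ∈ I, δ i} ≤ srk X := by
  set ψ := (LinearMap.pi fun i => (φ i).comp (LinearMap.proj i) :
    (Fin t → K) →ₗ[Fq] ∀ i, Matrix (Fin (n i)) (Fin (m i)) Fq) with hψ
  have hψinj : Function.Injective ψ := by
    intro a b hab
    funext i
    exact hφinj i (congrFun hab i)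
  constructor
  · exact (LinearEquiv.finrank_eq (Submodule.equivMapOfInjective ψ hψinj H)).symm
  · rintro X hX hX0
    obtain ⟨α, hα, rfl⟩ := hX
    have hα0 : α ≠ 0 := by rintro rfl; exact hX0 (map_zero ψ)
    have hΔle : Δ ≤ hammingNorm α := by
      have := hΔ.2 ⟨α, hα, 0, H.zero_mem, hα0, rfl⟩
      rwa [hammingDist_zero_right] at this
    obtain ⟨I, hIsub, hIcard⟩ := Finset.exists_subset_card_eq hΔle
    refine le_trans (Nat.sInf_le ⟨I, hIcard, rfl⟩) ?_
    have key : ∀ i ∈ I, δ i ≤ (ψ α i).rank := by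
      intro i hi
      have hαi : α i ≠ 0 := by simpa using hIsub hi
      refine hMRDdist i _ (hφrange i (α i)) ?_
      intro h0
      exact hαi (hφinj i (by rw [map_zero]; exact h0))
    calc ∑ i ∈ I, δ i ≤ ∑ i ∈ I, (ψ α i).rank := Finset.sum_le_sum key
      _ ≤ ∑ i, (ψ α i).rank := Finset.sum_le_sum_of_subset (Finset.subset_univ I)
      _ = srk (ψ α) := rfl
end
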